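/- arXiv:math/0208237 — 4 statements merged into one kernel-verified Lean document; each statement's English description precedes it below -/
import Mathlib

section
/- For every ε > 0 there exists a positive integer m = m(ε) such that for all i ≥ 1, the number f(i) of positive (1+ε)-aperiodic words of length i over an alphabet with m letters satisfies f(i) > m^{(1−ε/2)·i}. In particular the set of positive (1+ε)-aperiodic words over the alphabet is infinite. -/
noncomputable section

namespace OlshanskiiSapir

def listPow {γ : Type} (A : List γ) : ℕ → List γ
  | 0 => []
  | k + 1 => A ++ listPow A k

def CAperiodic {m : ℕ} (c : ℝ) (v : List (Fin m)) : Prop :=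
  ∀ A : List (Fin m), A ≠ [] → ∀ w : List (Fin m), w ≠ [] → w <:+: v →
    (∃ k : ℕ, w <:+: listPow A k) → (w.length : ℝ) < c * (A.length : ℝ)

open List Finset

variable {m : ℕ}

/-- all words of length `i` over `Fin m`, as a `Finset`. -/
def allW (m : ℕ) : ℕ → Finset (List (Fin m))
  | 0 => {[]}
  | i + 1 => ((Finset.univ : Finset (Fin m)) ×ˢ allW m i).image (fun p => p.1 :: p.2)

lemma mem_allW {v : List (Fin m)} {i : ℕ} : v ∈ allW m i ↔ v.length = i := by
  induction i generalizing v with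
  | zero => simp [allW, List.length_eq_zero_iff]
  | succ i ih =>
    simp only [allW, Finset.mem_image, Finset.mem_product, Finset.mem_univ, true_and]
    constructor
    · rintro ⟨⟨a, u⟩, hu, rfl⟩; simp [ih.mp hu]
    · intro hv
      cases v with
      | nil => simp at hv
      | cons a u => exact ⟨(a, u), ih.mpr (by simpa using hv), rfl⟩

lemma card_allW (m i : ℕ) : (allW m i).card = m ^ i := by
  induction i with
  | zero => simp [allW]
  | succ i ih =>
    have hinj : Function.Injective (fun p : Fin m × List (Fin m) => p.1 :: p.2) := by
      rintro ⟨a, u⟩ ⟨b, w⟩ h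
      simp only [List.cons.injEq] at h
      simp [h.1, h.2]
    rw [allW, Finset.card_image_of_injective _ hinj, Finset.card_product, ih]
    simp [pow_succ, mul_comm]

def goodW (m : ℕ) (ε : ℝ) (i : ℕ) : Finset (List (Fin m)) :=
  @Finset.filter _ (fun v => CAperiodic (1 + ε) v) (Classical.decPred _) (allW m i)

lemma mem_goodW {ε : ℝ} {i : ℕ} {v : List (Fin m)} :
    v ∈ goodW m ε i ↔ v.length = i ∧ CAperiodic (1 + ε) v := by
  classical
  rw [goodW]
  rw [Finset.filter_congr_decidable]
  rw [Finset.mem_filter, mem_allW]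

lemma caperiodic_of_infix {c : ℝ} {v u : List (Fin m)} (h : CAperiodic c v)
    (hi : u <:+: v) : CAperiodic c u :=
  fun A hA w hw hwu hk => h A hA w hw (hwu.trans hi) hk

lemma caperiodic_mono {c c' : ℝ} (hcc : c' ≤ c) {v : List (Fin m)}
    (h : CAperiodic c' v) : CAperiodic c v := by
  intro A hA w hw hwv hk
  have := h A hA w hw hwv hk
  have h0 : (0:ℝ) ≤ (A.length : ℝ) := Nat.cast_nonneg _
  nlinarith

lemma caperiodic_nil (c : ℝ) : CAperiodic c ([] : List (Fin m)) := by
  intro A hA w hw hwv hk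
  exact absurd (List.eq_nil_of_infix_nil hwv) hw

lemma caperiodic_singleton {ε : ℝ} (hε : 0 < ε) (a : Fin m) :
    CAperiodic (1 + ε) [a] := by
  intro A hA w hw hwv hk
  have h1 : w.length ≤ 1 := by simpa using hwv.length_le
  have h2 : 1 ≤ A.length := List.length_pos_iff.mpr hA
  have h2' : (1:ℝ) ≤ (A.length : ℝ) := by exact_mod_cast h2
  have h1' : (w.length : ℝ) ≤ 1 := by exact_mod_cast h1
  nlinarith

lemma goodW_zero (ε : ℝ) : goodW m ε 0 = {([] : List (Fin m))} := by
  ext v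
  simp only [mem_goodW, Finset.mem_singleton, List.length_eq_zero_iff]
  constructor
  · rintro ⟨rfl, -⟩; rfl
  · rintro rfl; exact ⟨rfl, caperiodic_nil _⟩

lemma card_goodW_zero (ε : ℝ) : (goodW m ε 0).card = 1 := by
  rw [goodW_zero]; simp

lemma card_goodW_one {ε : ℝ} (hε : 0 < ε) : (goodW m ε 1).card = m := by
  classical
  have : goodW m ε 1 = allW m 1 := by
    rw [goodW, Finset.filter_congr_decidable]
    apply Finset.filter_true_of_mem
    intro v hv
    rw [mem_allW] at hv
    rcases v with _ | ⟨a, _ | ⟨b, t⟩⟩ <;> simp at hv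
    exact caperiodic_singleton hε a
  rw [this, card_allW]; simp


def HasPeriod {γ : Type} (p : ℕ) (w : List γ) : Prop :=
  ∀ j, j + p < w.length → w[j + p]? = w[j]?

lemma listPow_length {γ : Type} (A : List γ) (k : ℕ) :
    (listPow A k).length = k * A.length := by
  induction k with
  | zero => simp [listPow]
  | succ k ih => simp [listPow, ih, Nat.succ_mul]; ring

lemma listPow_succ' {γ : Type} (A : List γ) (k : ℕ) :
    listPow A (k + 1) = listPow A k ++ A := by
  induction k with
  | zero => simp [listPow]
  | succ k ih =>
    show A ++ listPow A (k + 1) = (A ++ listPow A k) ++ A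
    rw [ih, List.append_assoc]

lemma hasPeriod_listPow {γ : Type} (A : List γ) (k : ℕ) :
    HasPeriod A.length (listPow A k) := by
  intro j hj
  rw [listPow_length] at hj
  cases k with
  | zero => omega
  | succ k =>
    have hj' : j < k * A.length := by
      rw [Nat.succ_mul] at hj; omega
    have h1 : (listPow A (k + 1))[j + A.length]? = (listPow A k)[j]? := by
      show (A ++ listPow A k)[j + A.length]? = (listPow A k)[j]?
      rw [List.getElem?_append_right (by omega)]
      congr 1
      omega
    have h2 : (listPow A (k + 1))[j]? = (listPow A k)[j]? := by
      rw [listPow_succ', List.getElem?_append_left (by rwa [listPow_length])]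
    rw [h1, h2]

lemma hasPeriod_of_infix {γ : Type} {p : ℕ} {w v : List γ} (h : HasPeriod p v)
    (hi : w <:+: v) : HasPeriod p w := by
  obtain ⟨x, y, rfl⟩ := hi
  intro j hj
  have e : ∀ n, n < w.length → (x ++ w ++ y)[x.length + n]? = w[n]? := by
    intro n hn
    rw [List.append_assoc, List.getElem?_append_right (by omega)]
    have : x.length + n - x.length = n := by omega
    rw [this, List.getElem?_append_left hn]
  have hlen : (x ++ w ++ y).length = x.length + w.length + y.length := by
    simp [Nat.add_assoc]
  have := h (x.length + j) (by omega)
  rw [e j (by omega)] at this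
  rw [← e (j + p) hj]
  rw [← this]
  congr 1
  omega

/-- the tail of `v` of length `d` is a periodic continuation with period `p`. -/
def PerTail {γ : Type} (p d : ℕ) (v : List γ) : Prop :=
  ∀ t, t + p < v.length → v.length ≤ t + p + d → v[t + p]? = v[t]?

lemma eq_of_perTail {γ : Type} {p d : ℕ} (hp : 1 ≤ p) {v v' : List γ}
    (hl : v.length = v'.length) (hpd : p + d ≤ v.length)
    (h1 : PerTail p d v) (h2 : PerTail p d v')
    (ht : v.take (v.length - d) = v'.take (v'.length - d)) : v = v' := by
  apply List.ext_getElem?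
  intro n
  induction n using Nat.strong_induction_on with
  | _ n ih =>
    by_cases hn : n < v.length - d
    · have h3 : (v.take (v.length - d))[n]? = (v'.take (v'.length - d))[n]? := by rw [ht]
      simp only [List.getElem?_take, if_pos hn,
        if_pos (show n < v'.length - d by omega)] at h3
      exact h3
    · by_cases hn2 : n < v.length
      · have hnp : p ≤ n := by omega
        have e1 : v[n]? = v[n - p]? := by
          have := h1 (n - p) (by omega) (by omega)
          rw [show n - p + p = n by omega] at this
          exact this
        have e2 : v'[n]? = v'[n - p]? := by
          have := h2 (n - p) (by omega) (by omega)
          rw [show n - p + p = n by omega] at this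
          exact this
        rw [e1, e2, ih (n - p) (by omega)]
      · rw [List.getElem?_eq_none (by omega), List.getElem?_eq_none (by omega)]


def lp (ε : ℝ) (p : ℕ) : ℕ := ⌈(1 + ε) * p⌉₊
def dp (ε : ℝ) (p : ℕ) : ℕ := lp ε p - p

lemma lp_gt {ε : ℝ} (hε : 0 < ε) {p : ℕ} (hp : 1 ≤ p) : p < lp ε p := by
  have hp' : (1:ℝ) ≤ (p:ℝ) := by exact_mod_cast hp
  have h1 : (p:ℝ) < (1 + ε) * p := by nlinarith
  have h2 : (1 + ε) * p ≤ (⌈(1 + ε) * p⌉₊ : ℝ) := Nat.le_ceil _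
  have : (p:ℝ) < (lp ε p : ℝ) := lt_of_lt_of_le h1 h2
  exact_mod_cast this

lemma dp_pos {ε : ℝ} (hε : 0 < ε) {p : ℕ} (hp : 1 ≤ p) : 1 ≤ dp ε p := by
  have := lp_gt hε hp; unfold dp; omega

lemma dp_ge {ε : ℝ} (hε : 0 < ε) {p : ℕ} (hp : 1 ≤ p) : ε * p ≤ (dp ε p : ℝ) := by
  have h1 : (1 + ε) * p ≤ (lp ε p : ℝ) := Nat.le_ceil _
  have h2 : p ≤ lp ε p := (lp_gt hε hp).le
  have h3 : (dp ε p : ℝ) = (lp ε p : ℝ) - p := by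
    unfold dp; push_cast [Nat.cast_sub h2]; ring
  nlinarith

lemma bad_step {ε : ℝ} (hε : 0 < ε) {u : List (Fin m)} {a : Fin m}
    (hu : CAperiodic (1 + ε) u) (hv : ¬ CAperiodic (1 + ε) (u ++ [a])) :
    ∃ p, 1 ≤ p ∧ p + dp ε p ≤ u.length + 1 ∧ PerTail p (dp ε p) (u ++ [a]) := by
  set v := u ++ [a] with hvdef
  unfold CAperiodic at hv
  push_neg at hv
  obtain ⟨A, hA, w, hw, hwv, ⟨k, hwk⟩, hlen⟩ := hv
  set p := A.length with hpdef
  have hp : 1 ≤ p := List.length_pos_iff.mpr hA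
  have hlw : lp ε p ≤ w.length := Nat.ceil_le.mpr hlen
  have hsuf : w <:+ v := by
    obtain ⟨x, y, hxy⟩ := hwv
    rcases List.eq_nil_or_concat y with rfl | ⟨L, b, rfl⟩
    · exact ⟨x, by simpa using hxy⟩
    · exfalso
      have hxy' : x ++ w ++ L.concat b = u ++ [a] := hxy.trans hvdef
      have h2 : (x ++ w ++ L) ++ [b] = u ++ [a] := by
        rw [← hxy']; simp [List.concat_eq_append, List.append_assoc]
      have h3 : x ++ w ++ L = u := (List.append_inj' h2 rfl).1
      have hwu : w <:+: u := ⟨x, L, h3⟩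
      have := hu A hA w hw hwu ⟨k, hwk⟩
      linarith
  have hper : HasPeriod p w := hasPeriod_of_infix (hasPeriod_listPow A k) hwk
  have hvlen : v.length = u.length + 1 := by simp [hvdef]
  have hplp : p ≤ lp ε p := (lp_gt hε hp).le
  have hwvlen : w.length ≤ v.length := hsuf.length_le
  refine ⟨p, hp, by unfold dp; omega, ?_⟩
  obtain ⟨z, hz⟩ := hsuf
  have hzl : z.length + w.length = v.length := by rw [← hz]; simp
  intro t ht hd
  have hdp : p + dp ε p = lp ε p := by unfold dp; omega
  have e : ∀ n, z.length ≤ n → v[n]? = w[n - z.length]? := by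
    intro n h1
    rw [← hz, List.getElem?_append_right h1]
  rw [e (t + p) (by omega), e t (by omega)]
  rw [show t + p - z.length = (t - z.length) + p by omega]
  exact hper _ (by omega)

lemma card_bound (ε : ℝ) (hε : 0 < ε) (i : ℕ) :
    m * (goodW m ε i).card ≤ (goodW m ε (i + 1)).card +
      ∑ p ∈ (Finset.Icc 1 (i + 1)).filter (fun p => p + dp ε p ≤ i + 1),
        (goodW m ε (i + 1 - dp ε p)).card := by
  classical
  set E := ((goodW m ε i) ×ˢ (Finset.univ : Finset (Fin m))).image
      (fun q => q.1 ++ [q.2]) with hEdef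
  have hinj : Function.Injective (fun q : List (Fin m) × Fin m => q.1 ++ [q.2]) := by
    rintro ⟨u, a⟩ ⟨u', a'⟩ h
    simp only [← List.concat_eq_append] at h
    obtain ⟨h1, h2⟩ := List.concat_inj.mp h
    simp [h1, h2]
  have hEcard : E.card = m * (goodW m ε i).card := by
    rw [hEdef, Finset.card_image_of_injective _ hinj, Finset.card_product]
    simp [mul_comm]
  have hmemE : ∀ v ∈ E, ∃ u a, u ∈ goodW m ε i ∧ v = u ++ [a] := by
    intro v hv
    simp only [hEdef, Finset.mem_image, Finset.mem_product, Finset.mem_univ, and_true,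
      Prod.exists] at hv
    obtain ⟨u, a, hu, rfl⟩ := hv
    exact ⟨u, a, hu, rfl⟩
  rw [← hEcard, ← Finset.card_filter_add_card_filter_not
    (fun v => CAperiodic (1 + ε) v) (s := E)]
  apply Nat.add_le_add
  · apply Finset.card_le_card
    intro v hv
    obtain ⟨hvE, hg⟩ := Finset.mem_filter.mp hv
    obtain ⟨u, a, hu, rfl⟩ := hmemE v hvE
    rw [mem_goodW]
    exact ⟨by simp [(mem_goodW.mp hu).1], hg⟩
  · set B := E.filter (fun v => ¬ CAperiodic (1 + ε) v) with hBdef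
    set P := (Finset.Icc 1 (i + 1)).filter (fun p => p + dp ε p ≤ i + 1) with hPdef
    have hsub : B ⊆ P.biUnion (fun p => B.filter (fun v => PerTail p (dp ε p) v)) := by
      intro v hvB
      obtain ⟨hvE, hbad⟩ := Finset.mem_filter.mp hvB
      obtain ⟨u, a, hu, rfl⟩ := hmemE v hvE
      have hulen : u.length = i := (mem_goodW.mp hu).1
      obtain ⟨p, hp1, hp2, hp3⟩ := bad_step hε (mem_goodW.mp hu).2 hbad
      rw [hulen] at hp2
      refine Finset.mem_biUnion.mpr ⟨p, ?_, ?_⟩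
      · rw [hPdef, Finset.mem_filter, Finset.mem_Icc]
        have := dp_pos hε hp1
        exact ⟨⟨hp1, by omega⟩, hp2⟩
      · exact Finset.mem_filter.mpr ⟨hvB, hp3⟩
    calc B.card ≤ (P.biUnion (fun p => B.filter (fun v => PerTail p (dp ε p) v))).card :=
          Finset.card_le_card hsub
      _ ≤ ∑ p ∈ P, (B.filter (fun v => PerTail p (dp ε p) v)).card :=
          Finset.card_biUnion_le
      _ ≤ ∑ p ∈ P, (goodW m ε (i + 1 - dp ε p)).card := by
          apply Finset.sum_le_sum
          intro p hpP
          rw [hPdef, Finset.mem_filter, Finset.mem_Icc] at hpP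
          obtain ⟨⟨hp1, -⟩, hp2⟩ := hpP
          have hd1 : 1 ≤ dp ε p := dp_pos hε hp1
          apply Finset.card_le_card_of_injOn (fun v => v.take (i + 1 - dp ε p))
          · intro v hv
            obtain ⟨hvB, -⟩ := Finset.mem_filter.mp hv
            obtain ⟨hvE, -⟩ := Finset.mem_filter.mp hvB
            obtain ⟨u, a, hu, rfl⟩ := hmemE v hvE
            obtain ⟨hul, hug⟩ := mem_goodW.mp hu
            simp only [Finset.mem_coe, mem_goodW]
            have htk : (u ++ [a]).take (i + 1 - dp ε p) = u.take (i + 1 - dp ε p) :=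
              List.take_append_of_le_length (by omega)
            constructor
            · rw [htk, List.length_take]; omega
            · rw [htk]
              exact caperiodic_of_infix hug (List.take_prefix _ _).isInfix
          · intro v hv v' hv' heq
            obtain ⟨hvB, hvP⟩ := Finset.mem_filter.mp hv
            obtain ⟨hv'B, hv'P⟩ := Finset.mem_filter.mp hv'
            obtain ⟨hvE, -⟩ := Finset.mem_filter.mp hvB
            obtain ⟨hv'E, -⟩ := Finset.mem_filter.mp hv'B
            obtain ⟨u, a, hu, rfl⟩ := hmemE v hvE
            obtain ⟨u', a', hu', rfl⟩ := hmemE v' hv'E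
            have l1 : (u ++ [a]).length = i + 1 := by simp [(mem_goodW.mp hu).1]
            have l2 : (u' ++ [a']).length = i + 1 := by simp [(mem_goodW.mp hu').1]
            apply eq_of_perTail hp1 (l1.trans l2.symm) (by omega) hvP hv'P
            rw [l1, l2]
            exact heq

lemma geo_aux (n : ℕ) : ∑ p ∈ Finset.Icc 1 n, (1/4:ℝ)^p ≤ 1/3 - (1/3)*(1/4)^n := by
  induction n with
  | zero => simp
  | succ n ih =>
    rw [Finset.sum_Icc_succ_top (by omega)]
    have hpow : (1/4:ℝ)^(n+1) = (1/4)^n * (1/4) := pow_succ _ n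
    linarith

lemma geo (n : ℕ) : ∑ p ∈ Finset.Icc 1 n, (1/4:ℝ)^p ≤ 1/3 := by
  have := geo_aux n
  have h : (0:ℝ) ≤ (1/4)^n := by positivity
  linarith

lemma main_aux {ε : ℝ} (hε : 0 < ε) (hε1 : ε ≤ 1) {m : ℕ} (hm2 : 2 ≤ m)
    (hm4 : (4:ℝ) ≤ (m:ℝ) ^ (ε/2 : ℝ)) :
    ∀ i : ℕ, 1 ≤ i → (m:ℝ) ^ (((1:ℝ) - ε/2) * (i:ℝ)) < ((goodW m ε i).card : ℝ) := by
  have hm0 : (0:ℝ) < m := by positivity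
  have hm1 : (1:ℝ) < m := by
    have : (2:ℝ) ≤ m := by exact_mod_cast hm2
    linarith
  set β : ℝ := (m:ℝ) ^ ((1:ℝ) - ε/2) with hβ
  have hβpos : 0 < β := Real.rpow_pos_of_pos hm0 _
  have hβ1 : 1 ≤ β := by
    have := Real.rpow_le_rpow_of_exponent_le hm1.le (show (0:ℝ) ≤ 1 - ε/2 by linarith)
    simpa using this
  have hβm : β < (m:ℝ) := by
    have := Real.rpow_lt_rpow_of_exponent_lt hm1 (show (1:ℝ) - ε/2 < 1 by linarith)
    simpa using this
  have hmβ : 4 * β ≤ (m:ℝ) := by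
    have e : (m:ℝ) = (m:ℝ)^(ε/2:ℝ) * β := by
      rw [hβ, ← Real.rpow_add hm0]
      norm_num
    have := mul_le_mul_of_nonneg_right hm4 hβpos.le
    linarith [e ▸ this]
  have hq : β ^ (-ε) ≤ (1/4 : ℝ) := by
    have e1 : β ^ (-ε) = (m:ℝ) ^ (((1:ℝ) - ε/2) * (-ε)) := by
      rw [hβ, ← Real.rpow_mul hm0.le]
    have e2 : ((1:ℝ) - ε/2) * (-ε) ≤ -(ε/2) := by nlinarith
    have e3 : (m:ℝ) ^ (((1:ℝ)-ε/2) * (-ε)) ≤ (m:ℝ) ^ (-(ε/2)) :=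
      Real.rpow_le_rpow_of_exponent_le hm1.le e2
    have e4 : (m:ℝ) ^ (-(ε/2)) = ((m:ℝ)^(ε/2:ℝ))⁻¹ := Real.rpow_neg hm0.le _
    have e5 : ((m:ℝ)^(ε/2:ℝ))⁻¹ ≤ 1/4 := by
      rw [one_div]
      exact inv_anti₀ (by norm_num) hm4
    rw [e1]
    calc (m:ℝ) ^ (((1:ℝ)-ε/2) * (-ε)) ≤ (m:ℝ) ^ (-(ε/2)) := e3
      _ = ((m:ℝ)^(ε/2:ℝ))⁻¹ := e4
      _ ≤ 1/4 := e5
  have hq4 : ∀ p : ℕ, 1 ≤ p → ((β ^ dp ε p : ℝ))⁻¹ ≤ (1/4:ℝ)^p := by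
    intro p hp
    calc (β ^ dp ε p)⁻¹ = β ^ (-(dp ε p : ℝ)) := by
          rw [Real.rpow_neg hβpos.le, Real.rpow_natCast]
      _ ≤ β ^ (-ε * (p:ℝ)) := by
          apply Real.rpow_le_rpow_of_exponent_le hβ1
          have := dp_ge hε hp
          nlinarith
      _ = (β ^ (-ε)) ^ (p:ℕ) := by
          rw [Real.rpow_mul hβpos.le, Real.rpow_natCast]
      _ ≤ (1/4:ℝ)^p := pow_le_pow_left₀ (Real.rpow_nonneg hβpos.le _) hq p
  set f : ℕ → ℕ := fun i => (goodW m ε i).card with hfdef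
  have hf0 : ∀ i, (0:ℝ) ≤ (f i : ℝ) := fun i => Nat.cast_nonneg _
  have f1 : (f 1 : ℝ) = m := by rw [hfdef]; simp [card_goodW_one hε]
  have hstep : ∀ i, β * (f i : ℝ) ≤ (f (i+1) : ℝ) := by
    intro i
    induction i using Nat.strong_induction_on with
    | _ i IH =>
      have chain : ∀ a b, a + b ≤ i → β ^ b * (f a : ℝ) ≤ (f (a + b) : ℝ) := by
        intro a b
        induction b with
        | zero => intro _; simp
        | succ b ihb =>
          intro hab
          have h1 := ihb (by omega)
          have h2 := IH (a + b) (by omega)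
          calc β ^ (b+1) * (f a:ℝ) = β * (β ^ b * (f a:ℝ)) := by ring
            _ ≤ β * (f (a + b):ℝ) := mul_le_mul_of_nonneg_left h1 hβpos.le
            _ ≤ (f (a + b + 1):ℝ) := h2
      have hkey := card_bound (m := m) ε hε i
      have hkeyR : (m:ℝ) * (f i:ℝ) ≤ (f (i+1):ℝ) +
          ∑ p ∈ (Finset.Icc 1 (i+1)).filter (fun p => p + dp ε p ≤ i+1),
            (f (i + 1 - dp ε p) : ℝ) := by
        exact_mod_cast hkey
      set P := (Finset.Icc 1 (i+1)).filter (fun p => p + dp ε p ≤ i+1) with hP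
      have hterm : ∀ p ∈ P, (f (i + 1 - dp ε p) : ℝ) ≤ (f i:ℝ) * β * (1/4:ℝ)^p := by
        intro p hpP
        rw [hP, Finset.mem_filter, Finset.mem_Icc] at hpP
        obtain ⟨⟨hp1, -⟩, hp2⟩ := hpP
        have hd1 : 1 ≤ dp ε p := dp_pos hε hp1
        have hc := chain (i + 1 - dp ε p) (dp ε p - 1) (by omega)
        rw [show i + 1 - dp ε p + (dp ε p - 1) = i by omega] at hc
        have hβd : (0:ℝ) < β ^ (dp ε p - 1) := pow_pos hβpos _
        have h4 := hq4 p hp1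
        have e : (f i : ℝ) * β * (β ^ dp ε p)⁻¹ = (f i:ℝ) / β ^ (dp ε p - 1) := by
          have epow : β ^ dp ε p = β ^ (dp ε p - 1) * β := by
            conv_lhs => rw [show dp ε p = (dp ε p - 1) + 1 by omega]
            rw [pow_succ]
          rw [epow]
          field_simp
        calc (f (i+1-dp ε p) : ℝ) ≤ (f i:ℝ) / β^(dp ε p - 1) := by
              rw [le_div_iff₀ hβd]; nlinarith [hc]
          _ = (f i:ℝ) * β * (β ^ dp ε p)⁻¹ := e.symm
          _ ≤ (f i:ℝ) * β * (1/4:ℝ)^p := by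
              apply mul_le_mul_of_nonneg_left h4
              positivity
      have hsum : ∑ p ∈ P, (f (i + 1 - dp ε p):ℝ) ≤ (f i:ℝ) * β * (1/3) := by
        calc ∑ p ∈ P, (f (i+1-dp ε p):ℝ) ≤ ∑ p ∈ P, (f i:ℝ) * β * (1/4:ℝ)^p :=
              Finset.sum_le_sum hterm
          _ = (f i:ℝ) * β * ∑ p ∈ P, (1/4:ℝ)^p := by rw [Finset.mul_sum]
          _ ≤ (f i:ℝ) * β * ∑ p ∈ Finset.Icc 1 (i+1), (1/4:ℝ)^p := by
              apply mul_le_mul_of_nonneg_left _ (by positivity)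
              apply Finset.sum_le_sum_of_subset_of_nonneg (Finset.filter_subset _ _)
              intros
              positivity
          _ ≤ (f i:ℝ) * β * (1/3) := by
              apply mul_le_mul_of_nonneg_left (geo _) (by positivity)
      have hcomb : (m:ℝ) * (f i:ℝ) ≤ (f (i+1):ℝ) + (f i:ℝ) * β * (1/3) := by
        linarith
      nlinarith [mul_le_mul_of_nonneg_right hmβ (hf0 i)]
  have chain' : ∀ a b, β ^ b * (f a:ℝ) ≤ (f (a+b):ℝ) := by
    intro a b
    induction b with
    | zero => simp
    | succ b ih =>
      calc β^(b+1) * (f a:ℝ) = β * (β^b * (f a:ℝ)) := by ring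
        _ ≤ β * (f (a+b):ℝ) := mul_le_mul_of_nonneg_left ih hβpos.le
        _ ≤ (f (a+b+1):ℝ) := hstep _
  intro i hi
  have h1 := chain' 1 (i-1)
  rw [show 1 + (i-1) = i by omega, f1] at h1
  have hlt : β ^ i < β ^ (i-1) * (m:ℝ) := by
    have e : β ^ i = β ^ (i-1) * β := by
      rw [← pow_succ]
      congr 1
      omega
    rw [e]
    exact mul_lt_mul_of_pos_left hβm (pow_pos hβpos _)
  have hfin : β ^ i < (f i : ℝ) := lt_of_lt_of_le hlt h1
  have e2 : (m:ℝ) ^ (((1:ℝ) - ε/2) * (i:ℝ)) = β ^ i := by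
    rw [Real.rpow_mul hm0.le, hβ, Real.rpow_natCast]
  rw [e2]
  exact hfin

/-- For every `ε > 0` there is `m = m(ε)` such that for all
`i ≥ 1` the number of positive `(1+ε)`-aperiodic words of length `i` over an
`m`-letter alphabet is greater than `m^((1-ε/2)·i)`; in particular the set of
positive `(1+ε)`-aperiodic words over the alphabet is infinite. -/
theorem statement1 (ε : ℝ) (hε : 0 < ε) :
    ∃ m : ℕ, 0 < m ∧
      (∀ i : ℕ, 1 ≤ i →
        ((m : ℝ) ^ (((1 : ℝ) - ε / 2) * (i : ℝ)) <
          (Nat.card {v : List (Fin m) // v.length = i ∧ CAperiodic (1 + ε) v} : ℝ))) ∧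
      {v : List (Fin m) | CAperiodic (1 + ε) v}.Infinite := by
  set ε' : ℝ := min ε 1 with hε'def
  have hε'pos : 0 < ε' := lt_min hε one_pos
  have hε'1 : ε' ≤ 1 := min_le_right _ _
  have hε'ε : ε' ≤ ε := min_le_left _ _
  set m : ℕ := max 2 ⌈(4:ℝ)^((2:ℝ)/ε')⌉₊ with hmdef
  have hm2 : 2 ≤ m := le_max_left _ _
  have hm0 : (0:ℝ) < m := by
    have : (0:ℕ) < m := by omega
    exact_mod_cast this
  have hm1 : (1:ℝ) ≤ m := by
    have : (1:ℕ) ≤ m := by omega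
    exact_mod_cast this
  have hm4 : (4:ℝ) ≤ (m:ℝ) ^ (ε'/2 : ℝ) := by
    have h1 : (4:ℝ)^((2:ℝ)/ε') ≤ (m:ℝ) := by
      calc (4:ℝ)^((2:ℝ)/ε') ≤ (⌈(4:ℝ)^((2:ℝ)/ε')⌉₊ : ℝ) := Nat.le_ceil _
        _ ≤ (m:ℝ) := by
            have : ⌈(4:ℝ)^((2:ℝ)/ε')⌉₊ ≤ m := le_max_right _ _
            exact_mod_cast this
    have h2 : ((4:ℝ)^((2:ℝ)/ε')) ^ (ε'/2 : ℝ) ≤ (m:ℝ) ^ (ε'/2 : ℝ) :=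
      Real.rpow_le_rpow (by positivity) h1 (by positivity)
    have h3 : ((4:ℝ)^((2:ℝ)/ε')) ^ (ε'/2 : ℝ) = (4:ℝ) := by
      rw [← Real.rpow_mul (by norm_num)]
      rw [show (2:ℝ)/ε' * (ε'/2) = 1 by field_simp]
      norm_num
    linarith [h3 ▸ h2]
  have haux := main_aux hε'pos hε'1 hm2 hm4
  -- the finset of good words for ε' is included in the (1+ε)-aperiodic set
  have hincl : ∀ i : ℕ, ∀ v ∈ goodW m ε' i, v.length = i ∧ CAperiodic (1 + ε) v := by
    intro i v hv
    obtain ⟨h1, h2⟩ := mem_goodW.mp hv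
    exact ⟨h1, caperiodic_mono (by linarith) h2⟩
  -- card comparison
  have hcard : ∀ i : ℕ, (goodW m ε' i).card ≤
      Nat.card {v : List (Fin m) // v.length = i ∧ CAperiodic (1 + ε) v} := by
    intro i
    have e1 : Nat.card {v : List (Fin m) // v.length = i ∧ CAperiodic (1 + ε) v} =
        Set.ncard {v : List (Fin m) | v.length = i ∧ CAperiodic (1 + ε) v} :=
      Nat.card_coe_set_eq _
    have hfin : {v : List (Fin m) | v.length = i ∧ CAperiodic (1 + ε) v}.Finite := by
      apply Set.Finite.subset (allW m i).finite_toSet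
      intro v hv
      exact Finset.mem_coe.mpr (mem_allW.mpr hv.1)
    have hsub : (↑(goodW m ε' i) : Set (List (Fin m))) ⊆
        {v : List (Fin m) | v.length = i ∧ CAperiodic (1 + ε) v} := by
      intro v hv
      exact hincl i v (Finset.mem_coe.mp hv)
    calc (goodW m ε' i).card = (↑(goodW m ε' i) : Set (List (Fin m))).ncard :=
          (Set.ncard_coe_finset _).symm
      _ ≤ Set.ncard {v : List (Fin m) | v.length = i ∧ CAperiodic (1 + ε) v} :=
          Set.ncard_le_ncard hsub hfin
      _ = Nat.card {v : List (Fin m) // v.length = i ∧ CAperiodic (1 + ε) v} := e1.symm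
  refine ⟨m, by omega, ?_, ?_⟩
  · intro i hi
    have h1 : (m:ℝ) ^ (((1:ℝ) - ε/2) * (i:ℝ)) ≤ (m:ℝ) ^ (((1:ℝ) - ε'/2) * (i:ℝ)) := by
      apply Real.rpow_le_rpow_of_exponent_le hm1
      have : (0:ℝ) ≤ (i:ℝ) := Nat.cast_nonneg _
      nlinarith
    have h2 := haux i hi
    have h3 : ((goodW m ε' i).card : ℝ) ≤
        (Nat.card {v : List (Fin m) // v.length = i ∧ CAperiodic (1 + ε) v} : ℝ) := by
      exact_mod_cast hcard i
    linarith
  · have hne : ∀ i : ℕ, ∃ v, v ∈ goodW m ε' (i+1) := by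
      intro i
      have h2 := haux (i+1) (by omega)
      have hpos : (0:ℝ) < ((goodW m ε' (i+1)).card : ℝ) := by
        have : (0:ℝ) ≤ (m:ℝ) ^ (((1:ℝ) - ε'/2) * ((i+1:ℕ):ℝ)) := by positivity
        linarith
      have hpos' : 0 < (goodW m ε' (i+1)).card := by exact_mod_cast hpos
      exact Finset.card_pos.mp hpos'
    choose g hg using hne
    apply Set.infinite_of_injective_forall_mem (f := g)
    · intro i j hij
      have hi := (mem_goodW.mp (hg i)).1
      have hj := (mem_goodW.mp (hg j)).1
      have : i + 1 = j + 1 := by rw [← hi, ← hj, hij]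
      omega
    · intro i
      exact (hincl (i+1) (g i) (hg i)).2

end OlshanskiiSapir
end
end

section
/- Suppose R satisfies (Z1.1). If g ∈ G(0) is cyclically Y-reduced (i.e. |g²|_Y = 2|g|_Y) then for every integer m, |gᵐ|_Y = |m|·|g|_Y, and gᵐ is cyclically Y-reduced. -/
open scoped Classical

noncomputable section

namespace OlshanskiiSapir

/-- The number of occurrences of letters from `Y` (with either exponent `±1`)
in a word over the alphabet `X`. -/
def wordYLen {X : Type} (Y : Set X) (l : List (X × Bool)) : ℕ :=
  (l.filter fun p => decide (p.1 ∈ Y)).length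

/-- The `Y`-length of an element of the free group: the minimal number of
`Y`-letters occurring in a word representing it. -/
def fYLen {X : Type} (Y : Set X) (w : FreeGroup X) : ℕ :=
  sInf {k | ∃ l : List (X × Bool), FreeGroup.mk l = w ∧ wordYLen Y l = k}

/-- The `Y`-length of an element `g` of a group `G` marked by an epimorphism
`π : FreeGroup X →* G`: the minimal number of `Y`-letters in a word representing `g`. -/
def yLen {X G : Type} [Group G] (Y : Set X) (π : FreeGroup X →* G) (g : G) : ℕ :=
  sInf {k | ∃ l : List (X × Bool), π (FreeGroup.mk l) = g ∧ wordYLen Y l = k}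

/-- Condition (Z1.1): every relator either has `Y`-length `0` or, up to cyclic
shift (i.e. up to conjugacy), has the form `a * y₁ * b * y₂⁻¹` with `y₁, y₂ ∈ Y`
and `a`, `b` of `Y`-length `0`. -/
def Z11 {X : Type} (Y : Set X) (R : Set (FreeGroup X)) : Prop :=
  ∀ r ∈ R, fYLen Y r = 0 ∨
    ∃ a b : FreeGroup X, ∃ y₁ ∈ Y, ∃ y₂ ∈ Y,
      fYLen Y a = 0 ∧ fYLen Y b = 0 ∧
      IsConj (a * FreeGroup.of y₁ * b * (FreeGroup.of y₂)⁻¹) r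

/-- An element of `G` is essential if no conjugate of it is a `0`-element
(an element of `Y`-length `0`). -/
def Essential {X G : Type} [Group G] (Y : Set X) (π : FreeGroup X →* G) (g : G) : Prop :=
  ∀ h : G, yLen Y π (h * g * h⁻¹) ≠ 0

/-- `OSub Y π g`: the maximal subgroup consisting of `0`-elements which
contains `g` in its normalizer. -/
def OSub {X G : Type} [Group G] (Y : Set X) (π : FreeGroup X →* G) (g : G) : Subgroup G :=
  sSup {H : Subgroup G | (∀ x ∈ H, yLen Y π x = 0) ∧ g ∈ Subgroup.normalizer (H : Set G)}

section Aux


variable {X G : Type} [Group G] (Y : Set X) (R : Set (FreeGroup X)) (π : FreeGroup X →* G)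

lemma wordYLen_nil : wordYLen Y ([] : List (X × Bool)) = 0 := rfl

lemma wordYLen_cons (p : X × Bool) (l : List (X × Bool)) :
    wordYLen Y (p :: l) = (if p.1 ∈ Y then 1 else 0) + wordYLen Y l := by
  by_cases h : p.1 ∈ Y <;> simp [wordYLen, List.filter_cons, h, Nat.add_comm]

lemma wordYLen_append (l₁ l₂ : List (X × Bool)) :
    wordYLen Y (l₁ ++ l₂) = wordYLen Y l₁ + wordYLen Y l₂ := by
  simp [wordYLen, List.filter_append]

lemma wordYLen_invRev (l : List (X × Bool)) :
    wordYLen Y (FreeGroup.invRev l) = wordYLen Y l := by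
  induction l with
  | nil => rfl
  | cons p l ih =>
    have h1 : FreeGroup.invRev (p :: l) = FreeGroup.invRev l ++ [(p.1, !p.2)] := by
      simp [FreeGroup.invRev]
    rw [h1, wordYLen_append, ih, wordYLen_cons]
    by_cases h : p.1 ∈ Y <;> simp [wordYLen, h, Nat.add_comm]

lemma yLen_le_word {x : G} {l : List (X × Bool)} (h : π (FreeGroup.mk l) = x) :
    yLen Y π x ≤ wordYLen Y l :=
  Nat.sInf_le ⟨l, h, rfl⟩

lemma exists_min_word (hπ : Function.Surjective π) (x : G) :
    ∃ l, π (FreeGroup.mk l) = x ∧ wordYLen Y l = yLen Y π x := by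
  have hne : {k | ∃ l : List (X × Bool), π (FreeGroup.mk l) = x ∧ wordYLen Y l = k}.Nonempty := by
    obtain ⟨w, hw⟩ := hπ x
    exact ⟨wordYLen Y w.toWord, w.toWord, by rw [FreeGroup.mk_toWord]; exact hw, rfl⟩
  exact Nat.sInf_mem hne

lemma yLen_zero_iff (hπ : Function.Surjective π) (x : G) :
    yLen Y π x = 0 ↔ ∃ l, π (FreeGroup.mk l) = x ∧ wordYLen Y l = 0 := by
  constructor
  · intro h
    obtain ⟨l, hl, hlen⟩ := exists_min_word Y π hπ x
    exact ⟨l, hl, by rw [hlen, h]⟩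
  · rintro ⟨l, hl, hlen⟩
    exact Nat.le_zero.1 (hlen ▸ yLen_le_word Y π hl)

lemma yLen_one : yLen Y π 1 = 0 := by
  refine Nat.le_zero.1 (le_trans (yLen_le_word Y π (l := []) ?_) le_rfl)
  rw [← FreeGroup.one_eq_mk, π.map_one]

lemma yLen_mul_le (hπ : Function.Surjective π) (x y : G) :
    yLen Y π (x * y) ≤ yLen Y π x + yLen Y π y := by
  obtain ⟨l₁, h₁, e₁⟩ := exists_min_word Y π hπ x
  obtain ⟨l₂, h₂, e₂⟩ := exists_min_word Y π hπ y
  have : π (FreeGroup.mk (l₁ ++ l₂)) = x * y := by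
    rw [← FreeGroup.mul_mk, π.map_mul, h₁, h₂]
  calc yLen Y π (x * y) ≤ wordYLen Y (l₁ ++ l₂) := yLen_le_word Y π this
  _ = yLen Y π x + yLen Y π y := by rw [wordYLen_append, e₁, e₂]

lemma yLen_inv (hπ : Function.Surjective π) (x : G) :
    yLen Y π x⁻¹ = yLen Y π x := by
  have key : ∀ z : G, yLen Y π z⁻¹ ≤ yLen Y π z := by
    intro z
    obtain ⟨l, hl, e⟩ := exists_min_word Y π hπ z
    have : π (FreeGroup.mk (FreeGroup.invRev l)) = z⁻¹ := by
      rw [← FreeGroup.inv_mk, π.map_inv, hl]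
    calc yLen Y π z⁻¹ ≤ wordYLen Y (FreeGroup.invRev l) := yLen_le_word Y π this
    _ = yLen Y π z := by rw [wordYLen_invRev, e]
  exact le_antisymm (key x) (by simpa using key x⁻¹)

lemma fYLen_zero_iff (w : FreeGroup X) :
    fYLen Y w = 0 ↔ ∃ l, FreeGroup.mk l = w ∧ wordYLen Y l = 0 := by
  have hne : {k | ∃ l : List (X × Bool), FreeGroup.mk l = w ∧ wordYLen Y l = k}.Nonempty :=
    ⟨wordYLen Y w.toWord, w.toWord, FreeGroup.mk_toWord, rfl⟩
  constructor
  · intro h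
    have := Nat.sInf_mem hne
    rw [show sInf {k | ∃ l : List (X × Bool), FreeGroup.mk l = w ∧ wordYLen Y l = k} = 0 from h] at this
    exact this
  · rintro ⟨l, hl, hlen⟩
    exact Nat.le_zero.1 (Nat.sInf_le ⟨l, hl, hlen⟩)

lemma fYLen_one : fYLen Y (1 : FreeGroup X) = 0 :=
  (fYLen_zero_iff Y 1).2 ⟨[], FreeGroup.one_eq_mk.symm, rfl⟩

lemma fYLen_inv_zero {w : FreeGroup X} (h : fYLen Y w = 0) : fYLen Y w⁻¹ = 0 := by
  obtain ⟨l, hl, hlen⟩ := (fYLen_zero_iff Y w).1 h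
  exact (fYLen_zero_iff Y w⁻¹).2 ⟨FreeGroup.invRev l, by rw [← FreeGroup.inv_mk, hl],
    by rw [wordYLen_invRev, hlen]⟩

lemma fYLen_mul_zero {w v : FreeGroup X} (hw : fYLen Y w = 0) (hv : fYLen Y v = 0) :
    fYLen Y (w * v) = 0 := by
  obtain ⟨l₁, h₁, e₁⟩ := (fYLen_zero_iff Y w).1 hw
  obtain ⟨l₂, h₂, e₂⟩ := (fYLen_zero_iff Y v).1 hv
  exact (fYLen_zero_iff Y (w * v)).2 ⟨l₁ ++ l₂, by rw [← FreeGroup.mul_mk, h₁, h₂],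
    by rw [wordYLen_append, e₁, e₂]⟩

lemma yLen_pi_fy0 {w : FreeGroup X} (h : fYLen Y w = 0) : yLen Y π (π w) = 0 := by
  obtain ⟨l, hl, hlen⟩ := (fYLen_zero_iff Y w).1 h
  exact Nat.le_zero.1 (hlen ▸ yLen_le_word Y π (by rw [hl]))

/-! ### The permutation model -/

/-- The relation generating the alphabet identifications. -/
def MRel : X × G → X × G → Prop := fun p q =>
  ∃ a b : FreeGroup X, ∃ y₁ ∈ Y, ∃ y₂ ∈ Y, fYLen Y a = 0 ∧ fYLen Y b = 0 ∧
    (∃ r ∈ R, IsConj (a * FreeGroup.of y₁ * b * (FreeGroup.of y₂)⁻¹) r) ∧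
    p.1 = y₂ ∧ q.1 = y₁ ∧ q.2 = π b * p.2

/-- The alphabet. -/
abbrev MA : Type := Quot (MRel Y R π)

/-- The space on which everything acts. -/
abbrev Om : Type := G × FreeGroup (MA Y R π)

/-- Action of a `Y`-letter. -/
def TAct (x : X) : Equiv.Perm (Om Y R π) where
  toFun ω := (π (FreeGroup.of x) * ω.1, FreeGroup.of (Quot.mk _ (x, ω.1)) * ω.2)
  invFun ω := (π (FreeGroup.of x)⁻¹ * ω.1,
    (FreeGroup.of (Quot.mk (MRel Y R π) (x, π (FreeGroup.of x)⁻¹ * ω.1)))⁻¹ * ω.2)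
  left_inv ω := by
    obtain ⟨g, ξ⟩ := ω
    simp
  right_inv ω := by
    obtain ⟨g, ξ⟩ := ω
    simp

/-- Action of a non-`Y` generator. -/
def LAct (h : G) : Equiv.Perm (Om Y R π) :=
  (Equiv.mulLeft h).prodCongr (Equiv.refl _)

lemma LAct_apply (h : G) (ω : Om Y R π) : LAct Y R π h ω = (h * ω.1, ω.2) := rfl

lemma LAct_inv_apply (h : G) (ω : Om Y R π) : (LAct Y R π h)⁻¹ ω = (h⁻¹ * ω.1, ω.2) := rfl

def fmod (x : X) : Equiv.Perm (Om Y R π) :=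
  if x ∈ Y then TAct Y R π x else LAct Y R π (π (FreeGroup.of x))

/-- The main homomorphism from the free group to permutations of the model. -/
def rhoM : FreeGroup X →* Equiv.Perm (Om Y R π) := FreeGroup.lift (fmod Y R π)

lemma rhoM_of (x : X) : rhoM Y R π (FreeGroup.of x) = fmod Y R π x := FreeGroup.lift_apply_of

lemma mk_single_neg (a : X) : (FreeGroup.mk [(a, false)] : FreeGroup X) = (FreeGroup.of a)⁻¹ := by
  rw [FreeGroup.of, FreeGroup.inv_mk]
  rfl

lemma rhoM_cons (p : X × Bool) (l : List (X × Bool)) :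
    rhoM Y R π (FreeGroup.mk (p :: l))
      = rhoM Y R π (FreeGroup.mk [p]) * rhoM Y R π (FreeGroup.mk l) := by
  rw [← _root_.map_mul, FreeGroup.mul_mk]
  rfl

lemma rhoM_single_pos (a : X) :
    rhoM Y R π (FreeGroup.mk [(a, true)]) = fmod Y R π a := rhoM_of Y R π a

lemma rhoM_single_neg (a : X) :
    rhoM Y R π (FreeGroup.mk [(a, false)]) = (fmod Y R π a)⁻¹ := by
  rw [mk_single_neg, _root_.map_inv, rhoM_of]

lemma TAct_apply (x : X) (ω : Om Y R π) :
    TAct Y R π x ω = (π (FreeGroup.of x) * ω.1,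
      FreeGroup.of (Quot.mk (MRel Y R π) (x, ω.1)) * ω.2) := rfl

lemma TAct_inv_apply (x : X) (ω : Om Y R π) :
    (TAct Y R π x)⁻¹ ω = (π (FreeGroup.of x)⁻¹ * ω.1,
      (FreeGroup.of (Quot.mk (MRel Y R π) (x, π (FreeGroup.of x)⁻¹ * ω.1)))⁻¹ * ω.2) := rfl

/-- Words without `Y`-letters act only on the group coordinate. -/
lemma rhoM_free0 : ∀ (l : List (X × Bool)), wordYLen Y l = 0 →
    ∀ ω : Om Y R π, rhoM Y R π (FreeGroup.mk l) ω = (π (FreeGroup.mk l) * ω.1, ω.2) := by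
  intro l
  induction l with
  | nil =>
    intro _ ω
    rw [← FreeGroup.one_eq_mk, _root_.map_one, _root_.map_one]
    simp [Equiv.Perm.one_apply]
  | cons p l ih =>
    intro h ω
    rw [wordYLen_cons] at h
    have hp : p.1 ∉ Y := by
      intro hmem; rw [if_pos hmem] at h; omega
    have hl : wordYLen Y l = 0 := by
      by_cases hmem : p.1 ∈ Y
      · exact absurd hmem hp
      · rwa [if_neg hmem, zero_add] at h
    rw [rhoM_cons, Equiv.Perm.mul_apply, ih hl ω]
    have hval : π (FreeGroup.mk (p :: l)) = π (FreeGroup.mk [p]) * π (FreeGroup.mk l) := by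
      rw [← _root_.map_mul, FreeGroup.mul_mk]
      rfl
    obtain ⟨a, b⟩ := p
    cases b
    · rw [rhoM_single_neg]
      have : fmod Y R π a = LAct Y R π (π (FreeGroup.of a)) := if_neg hp
      rw [this]
      rw [LAct_inv_apply]
      rw [hval, mk_single_neg, _root_.map_inv]
      simp [mul_assoc]
    · rw [rhoM_single_pos]
      have : fmod Y R π a = LAct Y R π (π (FreeGroup.of a)) := if_neg hp
      rw [this, LAct_apply]
      rw [hval]
      have : (FreeGroup.mk [(a, true)] : FreeGroup X) = FreeGroup.of a := rfl
      rw [this]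
      simp [mul_assoc]

lemma rhoM_fy0 {w : FreeGroup X} (h : fYLen Y w = 0) (ω : Om Y R π) :
    rhoM Y R π w ω = (π w * ω.1, ω.2) := by
  obtain ⟨l, hl, hlen⟩ := (fYLen_zero_iff Y w).1 h
  rw [← hl]
  exact rhoM_free0 Y R π l hlen ω

/-! ### Expressions -/

/-- Flattening of the letter-part of an expression. -/
def restL (t : List ((X × Bool) × List (X × Bool))) : List (X × Bool) :=
  t.foldr (fun p acc => p.1 :: (p.2 ++ acc)) []

lemma restL_nil : restL ([] : List ((X × Bool) × List (X × Bool))) = [] := rfl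

lemma restL_cons (p : (X × Bool) × List (X × Bool)) (t : List ((X × Bool) × List (X × Bool))) :
    restL (p :: t) = p.1 :: (p.2 ++ restL t) := rfl

lemma restL_append (t₁ t₂ : List ((X × Bool) × List (X × Bool))) :
    restL (t₁ ++ t₂) = restL t₁ ++ restL t₂ := by
  induction t₁ with
  | nil => rfl
  | cons p t ih => simp [restL_cons, ih, List.append_assoc]

lemma wordYLen_restL (t : List ((X × Bool) × List (X × Bool)))
    (ht : ∀ p ∈ t, p.1.1 ∈ Y ∧ wordYLen Y p.2 = 0) :
    wordYLen Y (restL t) = t.length := by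
  induction t with
  | nil => rfl
  | cons p t ih =>
    obtain ⟨h1, h2⟩ := ht p List.mem_cons_self
    rw [restL_cons, wordYLen_cons, wordYLen_append, h2,
      ih (fun q hq => ht q (List.mem_cons_of_mem p hq)), if_pos h1, List.length_cons]
    omega

/-- The list of letters pushed onto the stack when evaluating an expression. -/
def xiList : List ((X × Bool) × List (X × Bool)) → List ((MA Y R π) × Bool)
  | [] => []
  | (d, u) :: t =>
      (Quot.mk (MRel Y R π)
        (d.1, (if d.2 then 1 else π (FreeGroup.mk [d])) * π (FreeGroup.mk (u ++ restL t))), d.2)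
        :: xiList t

lemma xiList_length (t : List ((X × Bool) × List (X × Bool))) :
    (xiList Y R π t).length = t.length := by
  induction t with
  | nil => rfl
  | cons p t ih =>
    obtain ⟨d, u⟩ := p
    simp only [xiList, List.length_cons, ih]

lemma pi_mk_append (l₁ l₂ : List (X × Bool)) :
    π (FreeGroup.mk (l₁ ++ l₂)) = π (FreeGroup.mk l₁) * π (FreeGroup.mk l₂) := by
  rw [← FreeGroup.mul_mk, π.map_mul]

lemma pi_mk_cons (p : X × Bool) (l : List (X × Bool)) :
    π (FreeGroup.mk (p :: l)) = π (FreeGroup.mk [p]) * π (FreeGroup.mk l) := by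
  rw [← List.singleton_append, ← FreeGroup.mul_mk, π.map_mul]

/-- Exact evaluation of an expression at the base point. -/
lemma rhoM_exact (t : List ((X × Bool) × List (X × Bool)))
    (ht : ∀ p ∈ t, p.1.1 ∈ Y ∧ wordYLen Y p.2 = 0) :
    rhoM Y R π (FreeGroup.mk (restL t)) ((1 : G), (1 : FreeGroup (MA Y R π)))
      = (π (FreeGroup.mk (restL t)), FreeGroup.mk (xiList Y R π t)) := by
  induction t with
  | nil =>
    rw [restL_nil, ← FreeGroup.one_eq_mk, _root_.map_one, _root_.map_one]
    rfl
  | cons p t ih =>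
    obtain ⟨d, u⟩ := p
    obtain ⟨hdY, huY⟩ := ht (d, u) List.mem_cons_self
    have ht' := fun q hq => ht q (List.mem_cons_of_mem (d, u) hq)
    rw [restL_cons]
    rw [rhoM_cons, Equiv.Perm.mul_apply]
    have hmid : rhoM Y R π (FreeGroup.mk (u ++ restL t)) ((1 : G), (1 : FreeGroup (MA Y R π)))
        = (π (FreeGroup.mk (u ++ restL t)), FreeGroup.mk (xiList Y R π t)) := by
      have : FreeGroup.mk (u ++ restL t) = FreeGroup.mk u * FreeGroup.mk (restL t) :=
        (FreeGroup.mul_mk).symm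
      rw [this, _root_.map_mul, Equiv.Perm.mul_apply, ih ht', rhoM_free0 Y R π u huY,
        π.map_mul]
    rw [hmid]
    have hσ : π (FreeGroup.mk ((d, u).1 :: (u ++ restL t)))
        = π (FreeGroup.mk [d]) * π (FreeGroup.mk (u ++ restL t)) := pi_mk_cons π d _
    obtain ⟨a, b⟩ := d
    cases b
    · -- negative letter
      rw [rhoM_single_neg]
      have hf : fmod Y R π a = TAct Y R π a := if_pos hdY
      rw [hf, TAct_inv_apply]
      refine Prod.ext ?_ ?_
      · simp only [hσ]
        rw [mk_single_neg, π.map_inv]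
      · show (FreeGroup.of (Quot.mk (MRel Y R π)
            (a, π (FreeGroup.of a)⁻¹ * π (FreeGroup.mk (u ++ restL t)))))⁻¹
            * FreeGroup.mk (xiList Y R π t) = _
        have : (FreeGroup.of (Quot.mk (MRel Y R π)
            (a, π (FreeGroup.of a)⁻¹ * π (FreeGroup.mk (u ++ restL t)))))⁻¹
            = FreeGroup.mk [((Quot.mk (MRel Y R π)
              (a, π (FreeGroup.of a)⁻¹ * π (FreeGroup.mk (u ++ restL t)))), false)] :=
          (mk_single_neg _).symm
        rw [this, FreeGroup.mul_mk]
        show _ = FreeGroup.mk (xiList Y R π (((a, false), u) :: t))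
        simp [xiList, mk_single_neg]
    · -- positive letter
      rw [rhoM_single_pos]
      have hf : fmod Y R π a = TAct Y R π a := if_pos hdY
      rw [hf, TAct_apply]
      refine Prod.ext ?_ ?_
      · simp only [hσ]
        rfl
      · show FreeGroup.of (Quot.mk (MRel Y R π) (a, π (FreeGroup.mk (u ++ restL t))))
            * FreeGroup.mk (xiList Y R π t) = _
        have : FreeGroup.of (Quot.mk (MRel Y R π) (a, π (FreeGroup.mk (u ++ restL t))))
            = FreeGroup.mk [((Quot.mk (MRel Y R π) (a, π (FreeGroup.mk (u ++ restL t)))), true)] :=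
          rfl
        rw [this, FreeGroup.mul_mk]
        show _ = FreeGroup.mk (xiList Y R π (((a, true), u) :: t))
        simp [xiList]

/-! ### Relators act trivially -/

lemma rhoM_core (a b : FreeGroup X) (y₁ y₂ : X) (hy₁ : y₁ ∈ Y) (hy₂ : y₂ ∈ Y)
    (ha : fYLen Y a = 0) (hb : fYLen Y b = 0)
    (hrel : ∃ r ∈ R, IsConj (a * FreeGroup.of y₁ * b * (FreeGroup.of y₂)⁻¹) r)
    (hcore : π (a * FreeGroup.of y₁ * b * (FreeGroup.of y₂)⁻¹) = 1) :
    rhoM Y R π (a * FreeGroup.of y₁ * b * (FreeGroup.of y₂)⁻¹) = 1 := by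
  have hπab : π a * π (FreeGroup.of y₁) * π b * π (FreeGroup.of y₂)⁻¹ = 1 := by
    simpa [_root_.map_mul, _root_.map_inv] using hcore
  apply Equiv.ext
  intro ω
  obtain ⟨g, ξ⟩ := ω
  rw [Equiv.Perm.one_apply]
  rw [_root_.map_mul, _root_.map_mul, _root_.map_mul, _root_.map_inv, rhoM_of, rhoM_of]
  have hf1 : fmod Y R π y₁ = TAct Y R π y₁ := if_pos hy₁
  have hf2 : fmod Y R π y₂ = TAct Y R π y₂ := if_pos hy₂
  rw [hf1, hf2]
  rw [Equiv.Perm.mul_apply, Equiv.Perm.mul_apply, Equiv.Perm.mul_apply]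
  rw [TAct_inv_apply]
  rw [rhoM_fy0 Y R π hb]
  rw [TAct_apply]
  rw [rhoM_fy0 Y R π ha]
  refine Prod.ext ?_ ?_
  · show π a * (π (FreeGroup.of y₁) * (π b * (π (FreeGroup.of y₂)⁻¹ * g))) = g
    have : π a * π (FreeGroup.of y₁) * π b * π (FreeGroup.of y₂)⁻¹ * g = g := by
      rw [hπab, one_mul]
    calc π a * (π (FreeGroup.of y₁) * (π b * (π (FreeGroup.of y₂)⁻¹ * g)))
        = π a * π (FreeGroup.of y₁) * π b * π (FreeGroup.of y₂)⁻¹ * g := by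
          simp [mul_assoc]
      _ = g := this
  · show FreeGroup.of (Quot.mk (MRel Y R π) (y₁, π b * (π (FreeGroup.of y₂)⁻¹ * g)))
        * ((FreeGroup.of (Quot.mk (MRel Y R π) (y₂, π (FreeGroup.of y₂)⁻¹ * g)))⁻¹ * ξ) = ξ
    have hquot : Quot.mk (MRel Y R π) (y₁, π b * (π (FreeGroup.of y₂)⁻¹ * g))
        = Quot.mk (MRel Y R π) (y₂, π (FreeGroup.of y₂)⁻¹ * g) := by
      refine (Quot.sound ?_).symm
      exact ⟨a, b, y₁, hy₁, y₂, hy₂, ha, hb, hrel, rfl, rfl, rfl⟩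
    rw [hquot, ← mul_assoc, mul_inv_cancel, one_mul]

lemma rhoM_ker (hZ : Z11 Y R) (hker : π.ker = Subgroup.normalClosure R) :
    ∀ w : FreeGroup X, π w = 1 → rhoM Y R π w = 1 := by
  have hRsub : R ⊆ ↑((rhoM Y R π).ker) := by
    intro r hr
    have hr1 : π r = 1 := by
      have : r ∈ π.ker := by
        rw [hker]; exact Subgroup.subset_normalClosure hr
      exact this
    rcases hZ r hr with h0 | ⟨a, b, y₁, hy₁, y₂, hy₂, ha, hb, hconj⟩
    · obtain ⟨l, hl, hlen⟩ := (fYLen_zero_iff Y r).1 h0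
      have : rhoM Y R π r = 1 := by
        apply Equiv.ext
        intro ω
        rw [← hl, rhoM_free0 Y R π l hlen ω, hl, hr1, one_mul, Equiv.Perm.one_apply]
      exact this
    · obtain ⟨c, hc⟩ := isConj_iff.1 hconj
      have hcore : π (a * FreeGroup.of y₁ * b * (FreeGroup.of y₂)⁻¹) = 1 := by
        have h1 : π (c * (a * FreeGroup.of y₁ * b * (FreeGroup.of y₂)⁻¹) * c⁻¹) = 1 := by
          rw [hc]; exact hr1
        rw [_root_.map_mul, _root_.map_mul, _root_.map_inv] at h1
        have := congrArg (fun z => (π c)⁻¹ * z * π c) h1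
        simpa [mul_assoc] using this
      have hco := rhoM_core Y R π a b y₁ y₂ hy₁ hy₂ ha hb ⟨r, hr, hconj⟩ hcore
      have : rhoM Y R π r = 1 := by
        rw [← hc, _root_.map_mul, _root_.map_mul, _root_.map_inv, hco]
        group
      exact this
  intro w hw
  have hwker : w ∈ Subgroup.normalClosure R := by rw [← hker]; exact hw
  have : Subgroup.normalClosure R ≤ (rhoM Y R π).ker :=
    Subgroup.normalClosure_le_normal hRsub
  exact this hwker

lemma rhoM_eq_of_pi_eq (hZ : Z11 Y R) (hker : π.ker = Subgroup.normalClosure R)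
    {u v : FreeGroup X} (h : π u = π v) : rhoM Y R π u = rhoM Y R π v := by
  have h1 : π (u * v⁻¹) = 1 := by rw [_root_.map_mul, _root_.map_inv, h, mul_inv_cancel]
  have h2 := rhoM_ker Y R π hZ hker _ h1
  rw [_root_.map_mul, _root_.map_inv] at h2
  have := congrArg (fun z => z * rhoM Y R π v) h2
  simpa [mul_assoc] using this

/-! ### Norm bound for arbitrary words -/

lemma norm_bound : ∀ (l : List (X × Bool)) (ω : Om Y R π),
    FreeGroup.norm ((rhoM Y R π (FreeGroup.mk l) ω).2)
      ≤ wordYLen Y l + FreeGroup.norm ω.2 := by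
  intro l
  induction l with
  | nil =>
    intro ω
    rw [← FreeGroup.one_eq_mk, _root_.map_one, Equiv.Perm.one_apply, wordYLen_nil, zero_add]
  | cons p l ih =>
    intro ω
    rw [rhoM_cons, Equiv.Perm.mul_apply, wordYLen_cons]
    set ω' := rhoM Y R π (FreeGroup.mk l) ω with hω'
    have hih := ih ω
    rw [← hω'] at hih
    by_cases hp : p.1 ∈ Y
    · rw [if_pos hp]
      obtain ⟨x, bb⟩ := p
      have hf : fmod Y R π x = TAct Y R π x := if_pos hp
      cases bb
      · rw [rhoM_single_neg, hf, TAct_inv_apply]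
        calc FreeGroup.norm ((FreeGroup.of _)⁻¹ * ω'.2)
            ≤ FreeGroup.norm ((FreeGroup.of (Quot.mk (MRel Y R π)
                (x, π (FreeGroup.of x)⁻¹ * ω'.1)))⁻¹) + FreeGroup.norm ω'.2 :=
              FreeGroup.norm_mul_le _ _
          _ ≤ 1 + (wordYLen Y l + FreeGroup.norm ω.2) := by
              rw [FreeGroup.norm_inv_eq, FreeGroup.norm_of]
              omega
          _ = 1 + wordYLen Y l + FreeGroup.norm ω.2 := by omega
      · rw [rhoM_single_pos, hf, TAct_apply]
        calc FreeGroup.norm (FreeGroup.of _ * ω'.2)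
            ≤ FreeGroup.norm (FreeGroup.of (Quot.mk (MRel Y R π) (x, ω'.1)))
                + FreeGroup.norm ω'.2 := FreeGroup.norm_mul_le _ _
          _ ≤ 1 + (wordYLen Y l + FreeGroup.norm ω.2) := by
              rw [FreeGroup.norm_of]; omega
          _ = 1 + wordYLen Y l + FreeGroup.norm ω.2 := by omega
    · rw [if_neg hp, zero_add]
      obtain ⟨x, bb⟩ := p
      have hf : fmod Y R π x = LAct Y R π (π (FreeGroup.of x)) := if_neg hp
      cases bb
      · rw [rhoM_single_neg, hf, LAct_inv_apply]
        exact hih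
      · rw [rhoM_single_pos, hf, LAct_apply]
        exact hih

/-! ### Reduced words in a free group -/

lemma reduce_eq_self_of_chain {α : Type*} [DecidableEq α] :
    ∀ {L : List (α × Bool)},
      L.Chain' (fun a b => ¬(a.1 = b.1 ∧ a.2 = !b.2)) → FreeGroup.reduce L = L := by
  intro L
  induction L with
  | nil => intro _; rfl
  | cons x L ih =>
    intro h
    have htl : FreeGroup.reduce L = L := ih (List.IsChain.tail h)
    rw [FreeGroup.reduce.cons, htl]
    cases L with
    | nil => rfl
    | cons y t =>
      have hxy : ¬(x.1 = y.1 ∧ x.2 = !y.2) := (List.isChain_cons_cons.1 h).1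
      simp only [if_neg hxy]

lemma norm_mk_of_chain {α : Type*} [DecidableEq α] {L : List (α × Bool)}
    (h : L.Chain' (fun a b => ¬(a.1 = b.1 ∧ a.2 = !b.2))) :
    FreeGroup.norm (FreeGroup.mk L) = L.length := by
  rw [FreeGroup.norm, FreeGroup.toWord_mk, reduce_eq_self_of_chain h]

/-! ### The key property of the alphabet relation -/

lemma Pprop_of_eqvGen (hker : π.ker = Subgroup.normalClosure R) {p q : X × G}
    (h : Relation.EqvGen (MRel Y R π) p q) :
    ∃ w w' : FreeGroup X, fYLen Y w = 0 ∧ fYLen Y w' = 0 ∧ q.2 = π w * p.2 ∧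
      π (FreeGroup.of q.1) * π w = π w' * π (FreeGroup.of p.1) := by
  induction h with
  | rel p q hpq =>
    obtain ⟨a, b, y₁, hy₁, y₂, hy₂, ha, hb, ⟨r, hrR, hconj⟩, hp1, hq1, hq2⟩ := hpq
    have hr1 : π r = 1 := by
      have : r ∈ π.ker := by rw [hker]; exact Subgroup.subset_normalClosure hrR
      exact this
    obtain ⟨c, hc⟩ := isConj_iff.1 hconj
    have hcore : π a * π (FreeGroup.of y₁) * π b * π (FreeGroup.of y₂)⁻¹ = 1 := by
      have h1 : π (c * (a * FreeGroup.of y₁ * b * (FreeGroup.of y₂)⁻¹) * c⁻¹) = 1 := by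
        rw [hc]; exact hr1
      rw [_root_.map_mul, _root_.map_mul, _root_.map_inv] at h1
      have h2 := congrArg (fun z => (π c)⁻¹ * z * π c) h1
      simp only [mul_one, ← mul_assoc, inv_mul_cancel, one_mul] at h2
      rw [← h2]
      simp [_root_.map_mul, _root_.map_inv, mul_assoc]
    refine ⟨b, a⁻¹, hb, fYLen_inv_zero Y ha, by rw [hq2], ?_⟩
    have h3 : π a * (π (FreeGroup.of y₁) * π b) = π (FreeGroup.of y₂) := by
      have h4 := congrArg (fun z => z * π (FreeGroup.of y₂)) hcore
      simpa [mul_assoc] using h4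
    rw [hq1, hp1, π.map_inv, ← h3]
    group
  | refl p =>
    exact ⟨1, 1, fYLen_one Y, fYLen_one Y, by simp, by simp⟩
  | symm p q _ ihh =>
    obtain ⟨w, w', h0, h0', heq, hrel⟩ := ihh
    refine ⟨w⁻¹, w'⁻¹, fYLen_inv_zero Y h0, fYLen_inv_zero Y h0', ?_, ?_⟩
    · rw [heq, π.map_inv]; group
    · have h4 : π (FreeGroup.of q.1) = π w' * π (FreeGroup.of p.1) * (π w)⁻¹ := by
        rw [← hrel]; group
      rw [π.map_inv, π.map_inv, h4]
      group
  | trans p q r _ _ ih1 ih2 =>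
    obtain ⟨w₁, w₁', h01, h01', heq1, hrel1⟩ := ih1
    obtain ⟨w₂, w₂', h02, h02', heq2, hrel2⟩ := ih2
    refine ⟨w₂ * w₁, w₂' * w₁', fYLen_mul_zero Y h02 h01, fYLen_mul_zero Y h02' h01', ?_, ?_⟩
    · rw [heq2, heq1, _root_.map_mul]; group
    · rw [_root_.map_mul, _root_.map_mul]
      calc π (FreeGroup.of r.1) * (π w₂ * π w₁)
          = (π (FreeGroup.of r.1) * π w₂) * π w₁ := by group
        _ = (π w₂' * π (FreeGroup.of q.1)) * π w₁ := by rw [hrel2]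
        _ = π w₂' * (π (FreeGroup.of q.1) * π w₁) := by group
        _ = π w₂' * (π w₁' * π (FreeGroup.of p.1)) := by rw [hrel1]
        _ = π w₂' * π w₁' * π (FreeGroup.of p.1) := by group

/-- The junction condition. -/
def Jcond (d : X × Bool) (u : List (X × Bool)) (d' : X × Bool) : Prop :=
  yLen Y π (π (FreeGroup.mk [d]) * π (FreeGroup.mk u) * π (FreeGroup.mk [d'])) ≠ 0

/-- If the expression satisfies the junction conditions then its stack word is reduced. -/
lemma xiList_chain (hker : π.ker = Subgroup.normalClosure R) :
    ∀ (t : List ((X × Bool) × List (X × Bool))),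
      (t.Chain' fun p q => Jcond Y π p.1 p.2 q.1) →
      (xiList Y R π t).Chain' (fun a b => ¬(a.1 = b.1 ∧ a.2 = !b.2)) := by
  intro t
  induction t with
  | nil => intro _; exact List.isChain_nil
  | cons p t ih =>
    intro hchain
    obtain ⟨d, u⟩ := p
    cases t with
    | nil => exact List.isChain_singleton _
    | cons p' t' =>
      obtain ⟨d', u'⟩ := p'
      have htail := ih (List.IsChain.tail hchain)
      have hJ : Jcond Y π d u d' := (List.isChain_cons_cons.1 hchain).1
      rw [show xiList Y R π ((d, u) :: (d', u') :: t')
          = (Quot.mk (MRel Y R π)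
              (d.1, (if d.2 then 1 else π (FreeGroup.mk [d]))
                * π (FreeGroup.mk (u ++ restL ((d', u') :: t')))), d.2)
            :: xiList Y R π ((d', u') :: t') from rfl]
      rw [show xiList Y R π ((d', u') :: t')
          = (Quot.mk (MRel Y R π)
              (d'.1, (if d'.2 then 1 else π (FreeGroup.mk [d']))
                * π (FreeGroup.mk (u' ++ restL t'))), d'.2)
            :: xiList Y R π t' from rfl] at htail ⊢
      refine List.isChain_cons_cons.2 ?_
      refine ⟨?_, htail⟩
      rintro ⟨hM, hb⟩
      simp only at hM hb
      -- decompose the state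
      have hS : π (FreeGroup.mk (u ++ restL ((d', u') :: t')))
          = π (FreeGroup.mk u) * (π (FreeGroup.mk [d']) * π (FreeGroup.mk (u' ++ restL t'))) := by
        rw [restL_cons, pi_mk_append, pi_mk_cons]
      have hEG := Quot.eqvGen_exact hM
      obtain ⟨w, w', h0, h0', heq, hrel⟩ := Pprop_of_eqvGen Y R π hker hEG
      simp only at heq hrel
      apply hJ
      set c := π (FreeGroup.mk u) with hc
      set S' := π (FreeGroup.mk (u' ++ restL t')) with hS'
      obtain ⟨x1, b1⟩ := d
      obtain ⟨x2, b2⟩ := d'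
      cases b1 <;> cases b2
      · exact absurd hb (by simp)
      · -- d negative, d' positive
        rw [hS] at heq
        have heq2 : S' = π w * (π (FreeGroup.mk [(x1, false)])
            * (c * (π (FreeGroup.mk [(x2, true)]) * S'))) := by
          simpa using heq
        clear heq
        have heq := heq2
        have hkey : π (FreeGroup.mk [(x1, false)]) * c * π (FreeGroup.mk [(x2, true)])
            = (π w)⁻¹ := by
          have h1 : π w * (π (FreeGroup.mk [(x1, false)])
              * (c * (π (FreeGroup.mk [(x2, true)]) * S'))) * S'⁻¹ = 1 := by
            rw [← heq]; group
          have h2 : π w * (π (FreeGroup.mk [(x1, false)]) * c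
              * π (FreeGroup.mk [(x2, true)])) = 1 := by
            rw [← h1]; group
          have := congrArg (fun z => (π w)⁻¹ * z) h2
          simp only [mul_one] at this
          rw [← this]; group
        rw [hkey]
        rw [show (π w)⁻¹ = π w⁻¹ from (π.map_inv w).symm]
        exact yLen_pi_fy0 Y π (fYLen_inv_zero Y h0)
      · -- d positive, d' negative
        rw [hS] at heq
        have heq2 : π (FreeGroup.mk [(x2, false)]) * S'
            = π w * (c * (π (FreeGroup.mk [(x2, false)]) * S')) := by
          simpa using heq
        clear heq
        have heq := heq2
        have h1 : (π w * c) * (π (FreeGroup.mk [(x2, false)]) * S')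
            = π (FreeGroup.mk [(x2, false)]) * S' := by
          conv_rhs => rw [heq]
          group
        have hwc : π w * c = 1 :=
          mul_right_cancel (b := π (FreeGroup.mk [(x2, false)]) * S')
            (by rw [one_mul]; exact h1)
        have hwc2 : c * π w = 1 := by
          calc c * π w = (π w)⁻¹ * (π w * c) * π w := by group
            _ = 1 := by rw [hwc]; group
        have hcw : c = (π w)⁻¹ := eq_inv_of_mul_eq_one_left hwc2
        -- hrel : π (of x2) * π w = π w' * π (of x1)
        have hgoal : π (FreeGroup.mk [(x1, true)]) * c * π (FreeGroup.mk [(x2, false)])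
            = π w'⁻¹ := by
          rw [hcw, π.map_inv]
          have e1 : π (FreeGroup.mk [(x1, true)]) = π (FreeGroup.of x1) := rfl
          have e2 : π (FreeGroup.mk [(x2, false)]) = (π (FreeGroup.of x2))⁻¹ := by
            rw [mk_single_neg, π.map_inv]
          rw [e1, e2]
          have h2 : π (FreeGroup.of x2) = π w' * π (FreeGroup.of x1) * (π w)⁻¹ := by
            rw [← hrel]; group
          rw [h2]; group
        rw [hgoal]
        exact yLen_pi_fy0 Y π (fYLen_inv_zero Y h0')
      · exact absurd hb (by simp)

/-! ### The key lemma -/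

lemma yLen_val_le (u₀ : List (X × Bool)) (t : List ((X × Bool) × List (X × Bool)))
    (hu₀ : wordYLen Y u₀ = 0) (ht : ∀ p ∈ t, p.1.1 ∈ Y ∧ wordYLen Y p.2 = 0) :
    yLen Y π (π (FreeGroup.mk (u₀ ++ restL t))) ≤ t.length := by
  have := yLen_le_word Y π (l := u₀ ++ restL t) rfl
  rwa [wordYLen_append, hu₀, zero_add, wordYLen_restL Y t ht] at this

/-- **Key lemma**: an expression with no trivial junctions realizes the `Y`-length. -/
lemma key_lemma (hπ : Function.Surjective π) (hZ : Z11 Y R)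
    (hker : π.ker = Subgroup.normalClosure R)
    (u₀ : List (X × Bool)) (t : List ((X × Bool) × List (X × Bool)))
    (hu₀ : wordYLen Y u₀ = 0) (ht : ∀ p ∈ t, p.1.1 ∈ Y ∧ wordYLen Y p.2 = 0)
    (hchain : t.Chain' fun p q => Jcond Y π p.1 p.2 q.1) :
    yLen Y π (π (FreeGroup.mk (u₀ ++ restL t))) = t.length := by
  refine le_antisymm (yLen_val_le Y π u₀ t hu₀ ht) ?_
  obtain ⟨l, hl, hlen⟩ := exists_min_word Y π hπ (π (FreeGroup.mk (u₀ ++ restL t)))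
  rw [← hlen]
  have hρ : rhoM Y R π (FreeGroup.mk l) = rhoM Y R π (FreeGroup.mk (u₀ ++ restL t)) :=
    rhoM_eq_of_pi_eq Y R π hZ hker hl
  have hright : (rhoM Y R π (FreeGroup.mk (u₀ ++ restL t))
      ((1 : G), (1 : FreeGroup (MA Y R π)))).2 = FreeGroup.mk (xiList Y R π t) := by
    have hsplit : FreeGroup.mk (u₀ ++ restL t)
        = FreeGroup.mk u₀ * FreeGroup.mk (restL t) := (FreeGroup.mul_mk).symm
    rw [hsplit, _root_.map_mul, Equiv.Perm.mul_apply, rhoM_exact Y R π t ht,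
      rhoM_free0 Y R π u₀ hu₀]
  have hnorm_right : FreeGroup.norm ((rhoM Y R π (FreeGroup.mk (u₀ ++ restL t))
      ((1 : G), (1 : FreeGroup (MA Y R π)))).2) = t.length := by
    rw [hright, norm_mk_of_chain (xiList_chain Y R π hker t hchain), xiList_length]
  have hnorm_left := norm_bound Y R π l ((1 : G), (1 : FreeGroup (MA Y R π)))
  rw [hρ, hnorm_right] at hnorm_left
  simpa using hnorm_left

/-- A failing junction shortens the expression by two. -/
lemma sub2 (hπ : Function.Surjective π)
    (u₀ : List (X × Bool)) (ta tb : List ((X × Bool) × List (X × Bool)))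
    (d d' : X × Bool) (u u' : List (X × Bool))
    (hu₀ : wordYLen Y u₀ = 0)
    (hta : ∀ p ∈ ta, p.1.1 ∈ Y ∧ wordYLen Y p.2 = 0)
    (htb : ∀ p ∈ tb, p.1.1 ∈ Y ∧ wordYLen Y p.2 = 0)
    (hu' : wordYLen Y u' = 0)
    (hJ : yLen Y π (π (FreeGroup.mk [d]) * π (FreeGroup.mk u) * π (FreeGroup.mk [d'])) = 0) :
    yLen Y π (π (FreeGroup.mk (u₀ ++ restL (ta ++ (d, u) :: (d', u') :: tb))))
      ≤ ta.length + tb.length := by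
  obtain ⟨v, hv, hvlen⟩ := (yLen_zero_iff Y π hπ _).1 hJ
  have hlist : u₀ ++ restL (ta ++ (d, u) :: (d', u') :: tb)
      = u₀ ++ restL ta ++ [d] ++ u ++ [d'] ++ (u' ++ restL tb) := by
    rw [restL_append, restL_cons, restL_cons]
    simp [List.append_assoc]
  have hval : π (FreeGroup.mk (u₀ ++ restL ta ++ v ++ u' ++ restL tb))
      = π (FreeGroup.mk (u₀ ++ restL (ta ++ (d, u) :: (d', u') :: tb))) := by
    rw [hlist]
    repeat rw [pi_mk_append]
    rw [hv]
    group
  calc yLen Y π (π (FreeGroup.mk (u₀ ++ restL (ta ++ (d, u) :: (d', u') :: tb))))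
      ≤ wordYLen Y (u₀ ++ restL ta ++ v ++ u' ++ restL tb) := yLen_le_word Y π hval
    _ = ta.length + tb.length := by
        repeat rw [wordYLen_append]
        rw [hu₀, hvlen, hu', wordYLen_restL Y ta hta, wordYLen_restL Y tb htb]
        omega

lemma not_chain'_split {α : Type*} {Rl : α → α → Prop} :
    ∀ {l : List α}, ¬ l.Chain' Rl →
      ∃ l₁ a b l₂, l = l₁ ++ a :: b :: l₂ ∧ ¬ Rl a b := by
  intro l
  induction l with
  | nil => intro h; exact absurd List.isChain_nil h
  | cons x l ih =>
    intro h
    cases l with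
    | nil => exact absurd (List.isChain_singleton x) h
    | cons y t =>
      by_cases hxy : Rl x y
      · have : ¬ (y :: t).Chain' Rl := fun hc => h (List.isChain_cons_cons.2 ⟨hxy, hc⟩)
        obtain ⟨l₁, a, b, l₂, heq, hab⟩ := ih this
        exact ⟨x :: l₁, a, b, l₂, by rw [heq]; rfl, hab⟩
      · exact ⟨[], x, y, t, rfl, hxy⟩

lemma parse_word : ∀ l : List (X × Bool), ∃ u₀ t,
    wordYLen Y u₀ = 0 ∧ (∀ p ∈ t, p.1.1 ∈ Y ∧ wordYLen Y p.2 = 0) ∧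
    u₀ ++ restL t = l ∧ t.length = wordYLen Y l := by
  intro l
  induction l with
  | nil => exact ⟨[], [], rfl, by simp, rfl, rfl⟩
  | cons p l ih =>
    obtain ⟨u₀, t, h1, h2, h3, h4⟩ := ih
    by_cases hp : p.1 ∈ Y
    · refine ⟨[], (p, u₀) :: t, rfl, ?_, ?_, ?_⟩
      · intro q hq
        rcases List.mem_cons.1 hq with hq | hq
        · rw [hq]; exact ⟨hp, h1⟩
        · exact h2 q hq
      · rw [List.nil_append, restL_cons, h3]
      · rw [List.length_cons, h4, wordYLen_cons, if_pos hp]; omega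
    · refine ⟨p :: u₀, t, ?_, h2, by rw [List.cons_append, h3], ?_⟩
      · rw [wordYLen_cons, if_neg hp, h1]
      · rw [h4, wordYLen_cons, if_neg hp, zero_add]

/-! ### Gluing expressions for powers -/

lemma glue_value (u₀ : List (X × Bool)) (q T : List ((X × Bool) × List (X × Bool)))
    (p : (X × Bool) × List (X × Bool)) :
    π (FreeGroup.mk (u₀ ++ restL (q ++ (p.1, p.2 ++ u₀) :: T)))
      = π (FreeGroup.mk (u₀ ++ restL (q ++ [p]))) * π (FreeGroup.mk (u₀ ++ restL T)) := by
  have h1 : u₀ ++ restL (q ++ (p.1, p.2 ++ u₀) :: T)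
      = u₀ ++ restL q ++ [p.1] ++ p.2 ++ (u₀ ++ restL T) := by
    rw [restL_append, restL_cons]
    simp [List.append_assoc]
  have h2 : u₀ ++ restL (q ++ [p]) = u₀ ++ restL q ++ [p.1] ++ p.2 := by
    rw [restL_append, restL_cons, restL_nil]
    simp [List.append_assoc]
  rw [h1, h2]
  repeat rw [pi_mk_append]

lemma glue_chain (u₀ : List (X × Bool)) (q T : List ((X × Bool) × List (X × Bool)))
    (p : (X × Bool) × List (X × Bool))
    (h1 : (q ++ [p]).Chain' fun a b => Jcond Y π a.1 a.2 b.1)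
    (h2 : T.Chain' fun a b => Jcond Y π a.1 a.2 b.1)
    (hjoin : ∀ y ∈ T.head?, Jcond Y π p.1 (p.2 ++ u₀) y.1) :
    (q ++ (p.1, p.2 ++ u₀) :: T).Chain' fun a b => Jcond Y π a.1 a.2 b.1 := by
  obtain ⟨hq, -, hlast⟩ := List.isChain_append.1 h1
  refine List.isChain_append.2 ⟨hq, ?_, ?_⟩
  · exact List.isChain_cons.2 ⟨fun y hy => hjoin y hy, h2⟩
  · intro x hx y hy
    rw [List.head?_cons, Option.mem_some_iff] at hy
    have := hlast x hx p (by rw [List.head?_cons, Option.mem_some_iff])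
    rw [← hy]
    exact this

lemma glue_head (u₀ : List (X × Bool)) (q T : List ((X × Bool) × List (X × Bool)))
    (p : (X × Bool) × List (X × Bool)) :
    (q ++ (p.1, p.2 ++ u₀) :: T).head?.map Prod.fst
      = (q ++ [p]).head?.map Prod.fst := by
  cases q with
  | nil => rfl
  | cons a q' => rfl

lemma pow_chain (_hπ : Function.Surjective π) (g : G)
    (u₀ : List (X × Bool)) (q : List ((X × Bool) × List (X × Bool)))
    (p : (X × Bool) × List (X × Bool))
    (hu₀ : wordYLen Y u₀ = 0)
    (hWF : ∀ r ∈ q ++ [p], r.1.1 ∈ Y ∧ wordYLen Y r.2 = 0)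
    (hchain : (q ++ [p]).Chain' fun a b => Jcond Y π a.1 a.2 b.1)
    (hval : π (FreeGroup.mk (u₀ ++ restL (q ++ [p]))) = g)
    (hcyc : ∀ y ∈ (q ++ [p]).head?, Jcond Y π p.1 (p.2 ++ u₀) y.1) :
    ∀ m : ℕ, ∃ T : List ((X × Bool) × List (X × Bool)),
      (∀ r ∈ T, r.1.1 ∈ Y ∧ wordYLen Y r.2 = 0) ∧
      (T.Chain' fun a b => Jcond Y π a.1 a.2 b.1) ∧
      T.length = (m + 1) * (q ++ [p]).length ∧
      π (FreeGroup.mk (u₀ ++ restL T)) = g ^ (m + 1) ∧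
      T.head?.map Prod.fst = (q ++ [p]).head?.map Prod.fst := by
  intro m
  induction m with
  | zero =>
    exact ⟨q ++ [p], hWF, hchain, by simp, by rw [pow_one]; exact hval, rfl⟩
  | succ m ih =>
    obtain ⟨T, ihWF, ihchain, ihlen, ihval, ihhead⟩ := ih
    refine ⟨q ++ (p.1, p.2 ++ u₀) :: T, ?_, ?_, ?_, ?_, ?_⟩
    · intro r hr
      rcases List.mem_append.1 hr with hr | hr
      · exact hWF r (List.mem_append.2 (Or.inl hr))
      · rcases List.mem_cons.1 hr with hr | hr
        · rw [hr]
          refine ⟨(hWF p (List.mem_append.2 (Or.inr (List.mem_singleton_self p)))).1, ?_⟩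
          rw [wordYLen_append, hu₀,
            (hWF p (List.mem_append.2 (Or.inr (List.mem_singleton_self p)))).2]
        · exact ihWF r hr
    · refine glue_chain Y π u₀ q T p hchain ihchain ?_
      intro y hy
      have h1 : T.head?.map Prod.fst = some y.1 := by
        rw [Option.mem_def] at hy
        rw [hy, Option.map_some]
      rw [ihhead] at h1
      obtain ⟨z, hz, hz1⟩ := Option.map_eq_some_iff.1 h1
      have := hcyc z (Option.mem_def.2 hz)
      rwa [hz1] at this
    · rw [List.length_append, List.length_cons, ihlen]
      rw [List.length_append, List.length_singleton]
      ring
    · rw [glue_value π u₀ q T p, hval, ihval, ← pow_succ']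
    · rw [glue_head]

lemma yLen_pow_zero (hπ : Function.Surjective π) (g : G) (hg0 : yLen Y π g = 0) :
    ∀ j : ℕ, yLen Y π (g ^ j) = 0 := by
  intro j
  induction j with
  | zero => rw [pow_zero]; exact yLen_one Y π
  | succ j ih =>
    rw [pow_succ]
    have := yLen_mul_le Y π hπ (g ^ j) g
    omega

/-- The main computation for natural powers. -/
lemma main_nat (hπ : Function.Surjective π)
    (hZ : Z11 Y R) (hker : π.ker = Subgroup.normalClosure R)
    (g : G) (hg : yLen Y π (g * g) = 2 * yLen Y π g) :
    ∀ j : ℕ, yLen Y π (g ^ j) = j * yLen Y π g := by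
  set n := yLen Y π g with hn
  by_cases hn0 : n = 0
  · intro j
    rw [hn0, Nat.mul_zero]
    exact yLen_pow_zero Y π hπ g (by rw [← hn0]) j
  -- the positive case
  obtain ⟨l, hl, hlen⟩ := exists_min_word Y π hπ g
  obtain ⟨u₀, t, hu₀, hWF, hflat, htlen⟩ := parse_word Y l
  rw [hlen] at htlen
  have hval : π (FreeGroup.mk (u₀ ++ restL t)) = g := by rw [hflat]; exact hl
  have htne : t ≠ [] := by
    intro h
    rw [h] at htlen
    rw [hn, ← htlen] at hn0
    exact hn0 rfl
  -- the chain condition holds by minimality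
  have hchain : t.Chain' fun a b => Jcond Y π a.1 a.2 b.1 := by
    by_contra hnc
    obtain ⟨ta, a, b, tb, heq, hab⟩ := not_chain'_split hnc
    have hab' : yLen Y π (π (FreeGroup.mk [a.1]) * π (FreeGroup.mk a.2)
        * π (FreeGroup.mk [b.1])) = 0 := by
      by_contra hne
      exact hab hne
    have hWF' : ∀ r, r ∈ ta ∨ r ∈ tb ∨ r = a ∨ r = b → r.1.1 ∈ Y ∧ wordYLen Y r.2 = 0 := by
      intro r hr
      apply hWF
      rw [heq]
      rcases hr with h | h | h | h
      · exact List.mem_append.2 (Or.inl h)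
      · simp [h]
      · simp [h]
      · simp [h]
    have hsub := sub2 Y π hπ u₀ ta tb a.1 b.1 a.2 b.2 hu₀
      (fun r hr => hWF' r (Or.inl hr)) (fun r hr => hWF' r (Or.inr (Or.inl hr)))
      (hWF' b (Or.inr (Or.inr (Or.inr rfl)))).2 hab'
    rw [show ((a.1, a.2) : (X × Bool) × List (X × Bool)) = a from rfl,
      show ((b.1, b.2) : (X × Bool) × List (X × Bool)) = b from rfl, ← heq, hval] at hsub
    have hlen2 : t.length = ta.length + tb.length + 2 := by
      rw [heq]; simp; omega
    rw [← hn] at hsub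
    omega
  -- decompose t from the right
  obtain ⟨q, p, hqp⟩ : ∃ q p, t = q ++ [p] := by
    rcases List.eq_nil_or_concat t with h | ⟨q, p, h⟩
    · exact absurd h htne
    · exact ⟨q, p, by rw [h, List.concat_eq_append]⟩
  -- the cyclic junction condition holds by `hg`
  have hcyc : ∀ y ∈ t.head?, Jcond Y π p.1 (p.2 ++ u₀) y.1 := by
    obtain ⟨dd, tt, hdt⟩ : ∃ dd tt, t = dd :: tt := by
      cases t with
      | nil => exact absurd rfl htne
      | cons dd tt => exact ⟨dd, tt, rfl⟩
    intro y hy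
    rw [hdt, List.head?_cons, Option.mem_some_iff] at hy
    subst hy
    intro hJ0
    -- a failing cyclic junction shortens g²
    have hsub := sub2 Y π hπ u₀ q tt p.1 dd.1 (p.2 ++ u₀) dd.2 hu₀
      (fun r hr => hWF r (by rw [hqp]; exact List.mem_append.2 (Or.inl hr)))
      (fun r hr => hWF r (by rw [hdt]; exact List.mem_cons_of_mem _ hr))
      (hWF dd (by rw [hdt]; exact List.mem_cons_self)).2 hJ0
    have hval2 : π (FreeGroup.mk (u₀ ++ restL (q ++ (p.1, p.2 ++ u₀) :: t))) = g * g := by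
      rw [glue_value π u₀ q t p, ← hqp, hval]
    rw [show ((dd.1, dd.2) : (X × Bool) × List (X × Bool)) = dd from rfl] at hsub
    rw [show ((q ++ (p.1, p.2 ++ u₀) :: dd :: tt : List ((X × Bool) × List (X × Bool))))
        = q ++ (p.1, p.2 ++ u₀) :: t from by rw [hdt]] at hsub
    rw [hval2] at hsub
    have hq : q.length + 1 = n := by rw [hn, ← htlen, hqp]; simp
    have htt : tt.length + 1 = n := by rw [hn, ← htlen, hdt]; simp
    rw [hg] at hsub
    omega
  -- conclude by the key lemma applied to the glued expressions
  intro j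
  cases j with
  | zero => rw [pow_zero, Nat.zero_mul]; exact yLen_one Y π
  | succ m =>
    obtain ⟨T, TWF, Tchain, Tlen, Tval, -⟩ := pow_chain Y π hπ g u₀ q p hu₀
      (by rw [← hqp]; exact hWF) (by rw [← hqp]; exact hchain) (by rw [← hqp]; exact hval)
      (by rw [← hqp]; exact hcyc) m
    rw [← Tval, key_lemma Y R π hπ hZ hker u₀ T hu₀ TWF Tchain, Tlen, ← hqp, htlen]

end Aux

/-- Suppose `R` satisfies (Z1.1). If `g ∈ G(0)` is cyclically
`Y`-reduced (`|g²|_Y = 2|g|_Y`), then for every integer `m`,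
`|gᵐ|_Y = |m|·|g|_Y` and `gᵐ` is cyclically `Y`-reduced. -/
theorem statement4 {X G : Type} [Group G] (Y : Set X) (R : Set (FreeGroup X))
    (π : FreeGroup X →* G) (hπ : Function.Surjective π)
    (hker : π.ker = Subgroup.normalClosure R) (hZ : Z11 Y R)
    (g : G) (hg : yLen Y π (g * g) = 2 * yLen Y π g) (m : ℤ) :
    yLen Y π (g ^ m) = m.natAbs * yLen Y π g ∧
      yLen Y π (g ^ m * g ^ m) = 2 * yLen Y π (g ^ m) := by
  have hNat := main_nat Y R π hπ hZ hker g hg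
  have hNat2 : ∀ j : ℕ, yLen Y π (g ^ j * g ^ j) = 2 * yLen Y π (g ^ j) := by
    intro j
    rw [← pow_add, hNat (j + j), hNat j]
    ring
  rcases Int.eq_nat_or_neg m with ⟨k, hk | hk⟩
  · subst hk
    rw [zpow_natCast, Int.natAbs_natCast]
    exact ⟨hNat k, hNat2 k⟩
  · subst hk
    have hzp : g ^ (-(k : ℤ)) = (g ^ k)⁻¹ := by
      rw [zpow_neg, zpow_natCast]
    rw [hzp, Int.natAbs_neg, Int.natAbs_natCast]
    constructor
    · rw [yLen_inv Y π hπ]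
      exact hNat k
    · have : (g ^ k)⁻¹ * (g ^ k)⁻¹ = (g ^ k * g ^ k)⁻¹ := by group
      rw [this, yLen_inv Y π hπ, yLen_inv Y π hπ]
      exact hNat2 k

end OlshanskiiSapir
end
end

section
/- Suppose R satisfies (Z1.1), (Z1.2) and (Z3.2). Let g be an essential element of G(0) that is cyclically minimal in rank 1/2 and let x ∈ 0(g). Then gⁿ commutes with x: gⁿ·x = x·gⁿ. -/
open scoped Classical

noncomputable section

namespace OlshanskiiSapir

/-- (Lemma `star1`.) Suppose the presentation satisfies
(Z1.1), (Z1.2) and (Z3.2).  Here `G₀ = G(0)` is defined by the relators `R₀`,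
and `G₁ = G(1/2)` is defined by the relators `R₀ ∪ Rh` (`Rh` being the hubs).
If `g` is an essential element of `G(0)` which is cyclically minimal in rank
`1/2`, and `x ∈ 0(g)`, then `gⁿ` commutes with `x`. -/
theorem statement11 {X G₀ G₁ : Type} [Group G₀] [Group G₁] (Y : Set X)
    (R₀ Rh : Set (FreeGroup X)) (n : ℕ) (hodd : Odd n)
    (π₀ : FreeGroup X →* G₀) (hs₀ : Function.Surjective π₀)
    (hk₀ : π₀.ker = Subgroup.normalClosure R₀)
    (π₁ : FreeGroup X →* G₁) (hs₁ : Function.Surjective π₁)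
    (hk₁ : π₁.ker = Subgroup.normalClosure (R₀ ∪ Rh))
    (φ : G₀ →* G₁) (hφ : ∀ w : FreeGroup X, φ (π₀ w) = π₁ w)
    (hZ11 : Z11 Y R₀)
    (hZ12 : ∀ u : FreeGroup X, fYLen Y u = 0 → π₀ (u ^ n) = 1)
    (hZ32 : ∀ g : G₀, Essential Y π₀ g →
      (∀ h : G₁, yLen Y π₀ g ≤ yLen Y π₁ (h * φ g * h⁻¹)) →
      ∃ r : G₀, yLen Y π₀ r = 0 ∧ ∀ x ∈ OSub Y π₀ g, Commute (g * r⁻¹) x)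
    (g : G₀) (hg : Essential Y π₀ g)
    (hgmin : ∀ h : G₁, yLen Y π₀ g ≤ yLen Y π₁ (h * φ g * h⁻¹))
    (x : G₀) (hx : x ∈ OSub Y π₀ g) :
    g ^ n * x = x * g ^ n := by
  obtain ⟨r, hr0, hrc⟩ := hZ32 g hg hgmin
  -- `r ^ n = 1` since `r` is a `0`-element (by Z1.2)
  have hrn : r ^ n = 1 := by
    have hne : {k | ∃ l : List (X × Bool), π₀ (FreeGroup.mk l) = r ∧ wordYLen Y l = k}.Nonempty := by
      obtain ⟨w, hw⟩ := hs₀ r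
      exact ⟨wordYLen Y w.toWord, w.toWord, by rw [FreeGroup.mk_toWord]; exact hw, rfl⟩
    have h0 : (0 : ℕ) ∈ {k | ∃ l : List (X × Bool),
        π₀ (FreeGroup.mk l) = r ∧ wordYLen Y l = k} := by
      rw [← hr0]
      exact Nat.sInf_mem hne
    obtain ⟨l, hl, hl0⟩ := h0
    have hf : fYLen Y (FreeGroup.mk l) = 0 :=
      Nat.sInf_eq_zero.mpr (Or.inl ⟨l, rfl, hl0⟩)
    have h1 := hZ12 (FreeGroup.mk l) hf
    rw [map_pow, hl] at h1
    exact h1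
  -- every element of `OSub` centralizes `g ^ n`
  have key : OSub Y π₀ g ≤ Subgroup.centralizer {g ^ n} := by
    refine sSup_le ?_
    rintro H ⟨hH0, hHn⟩ y hy
    rw [Subgroup.mem_centralizer_iff]
    rintro a ha
    rw [Set.mem_singleton_iff] at ha
    subst ha
    have hconj : ∀ k : ℕ,
        g ^ k * y * (g ^ k)⁻¹ = r ^ k * y * (r ^ k)⁻¹ ∧ g ^ k * y * (g ^ k)⁻¹ ∈ H := by
      intro k
      induction k with
      | zero => simpa using hy
      | succ k ih =>
        obtain ⟨ihe, ihm⟩ := ih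
        have hw' : g * (g ^ k * y * (g ^ k)⁻¹) * g⁻¹ ∈ H :=
          (Subgroup.mem_normalizer_iff.mp hHn _).mp ihm
        have hHmem : H ∈ {H : Subgroup G₀ |
            (∀ x ∈ H, yLen Y π₀ x = 0) ∧ g ∈ Subgroup.normalizer (H : Set G₀)} := ⟨hH0, hHn⟩
        have hcw : Commute (g * r⁻¹) (g * (g ^ k * y * (g ^ k)⁻¹) * g⁻¹) :=
          hrc _ (le_sSup hHmem hw')
        have hmain : (g * r⁻¹)⁻¹ * (g * (g ^ k * y * (g ^ k)⁻¹) * g⁻¹) * (g * r⁻¹)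
            = g * (g ^ k * y * (g ^ k)⁻¹) * g⁻¹ := by
          rw [mul_assoc, ← hcw.eq, ← mul_assoc, inv_mul_cancel, one_mul]
        have hgw : g * (g ^ k * y * (g ^ k)⁻¹) * g⁻¹
            = r * (g ^ k * y * (g ^ k)⁻¹) * r⁻¹ := by
          conv_lhs => rw [← hmain]
          group
        constructor
        · have : g ^ (k + 1) * y * (g ^ (k + 1))⁻¹
              = g * (g ^ k * y * (g ^ k)⁻¹) * g⁻¹ := by group
          rw [this, hgw, ihe]
          group
        · have : g ^ (k + 1) * y * (g ^ (k + 1))⁻¹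
              = g * (g ^ k * y * (g ^ k)⁻¹) * g⁻¹ := by group
          rw [this]
          exact hw'
    have hn := (hconj n).1
    rw [hrn] at hn
    simp only [inv_one, mul_one, one_mul] at hn
    calc g ^ n * y = (g ^ n * y * (g ^ n)⁻¹) * g ^ n := by group
    _ = y * g ^ n := by rw [hn]
  exact Subgroup.mem_centralizer_iff.mp (key hx) _ rfl

end OlshanskiiSapir
end
end

section
/- Let G = ⟨A | R⟩ be a group satisfying the identity xⁿ = 1 for a sufficiently large odd n. Let P₁ and Q₁ be malnormal subgroups of G such that x·P₁·x⁻¹ ∩ Q₁ = {1} for every x ∈ G, and let φ: P₁ → Q₁ be an isomorphism. Form the HNN extension H = ⟨A, t | R, t·u·t⁻¹ = φ(u) for all u ∈ P₁⟩, regarded with A as 0-letters and {t} as the non-zero letter. Then for every essential cyclically minimal element h of H (with respect to t-length), the associated 0-subgroup 0(h) is trivial, and hence condition (Z3) holds for this presentation. -/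
open scoped Classical

set_option linter.unusedSectionVars false

noncomputable section

namespace OlshanskiiSapir

variable {G : Type} [Group G] {A B : Subgroup G} {φ : A ≃* B}

/-- The letters generating an HNN extension: elements of the base group `G`
and the stable letter `t` and its inverse. -/
def hnnLetter (a : G ⊕ Bool) : HNNExtension G A B φ :=
  match a with
  | Sum.inl g => HNNExtension.of g
  | Sum.inr true => HNNExtension.t
  | Sum.inr false => (HNNExtension.t : HNNExtension G A B φ)⁻¹

/-- Number of occurrences of `t^{±1}` in a word. -/
def tCount {G : Type} (l : List (G ⊕ Bool)) : ℕ :=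
  (l.filter fun a => Sum.isRight a).length

/-- The `t`-length of an element of the HNN extension: the minimal number of
occurrences of `t^{±1}` among expressions representing it. -/
def tLen (h : HNNExtension G A B φ) : ℕ :=
  sInf {k | ∃ l : List (G ⊕ Bool),
    (l.map (hnnLetter : G ⊕ Bool → HNNExtension G A B φ)).prod = h ∧ tCount l = k}

/-! ### Auxiliary lemmas -/

open HNNExtension

section Counting

@[simp] lemma tCount_nil : tCount ([] : List (G ⊕ Bool)) = 0 := rfl

@[simp] lemma tCount_inl (g : G) (l : List (G ⊕ Bool)) :
    tCount (Sum.inl g :: l) = tCount l := by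
  simp [tCount]

@[simp] lemma tCount_inr (b : Bool) (l : List (G ⊕ Bool)) :
    tCount (Sum.inr b :: l) = tCount l + 1 := by
  simp [tCount, List.filter_cons]

@[simp] lemma tCount_append (l₁ l₂ : List (G ⊕ Bool)) :
    tCount (l₁ ++ l₂) = tCount l₁ + tCount l₂ := by
  simp [tCount, List.filter_append]

/-- The product of the `t^u * g` parts of a list of pairs. -/
def pairProd (φ : A ≃* B) (l : List (ℤˣ × G)) : HNNExtension G A B φ :=
  (l.map fun x => t ^ (x.1 : ℤ) * of x.2).prod

@[simp] lemma pairProd_nil : pairProd φ ([] : List (ℤˣ × G)) = 1 := rfl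

@[simp] lemma pairProd_cons (p : ℤˣ × G) (l : List (ℤˣ × G)) :
    pairProd φ (p :: l) = t ^ (p.1 : ℤ) * of p.2 * pairProd φ l := by
  simp [pairProd]

@[simp] lemma pairProd_append (l₁ l₂ : List (ℤˣ × G)) :
    pairProd φ (l₁ ++ l₂) = pairProd φ l₁ * pairProd φ l₂ := by
  simp [pairProd]

lemma reducedWord_prod_eq (w : HNNExtension.NormalWord.ReducedWord G A B) :
    w.prod φ = of w.head * pairProd φ w.toList := rfl

/-- Turn a list of pairs into a list of letters. -/
def wordOf : List (ℤˣ × G) → List (G ⊕ Bool)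
  | [] => []
  | p :: l => (if p.1 = 1 then Sum.inr true else Sum.inr false) :: Sum.inl p.2 :: wordOf l

lemma wordOf_prod (l : List (ℤˣ × G)) :
    ((wordOf l).map (hnnLetter : G ⊕ Bool → HNNExtension G A B φ)).prod = pairProd φ l := by
  induction l with
  | nil => rfl
  | cons p l ih =>
    rcases Int.units_eq_one_or p.1 with hp | hp <;>
      simp [wordOf, hp, hnnLetter, ih, mul_assoc]

lemma tCount_wordOf (l : List (ℤˣ × G)) : tCount (wordOf l) = l.length := by
  induction l with
  | nil => rfl
  | cons p l ih =>
    by_cases hp : p.1 = 1 <;> simp [wordOf, hp, ih]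

lemma tLen_le (l : List (G ⊕ Bool)) (x : HNNExtension G A B φ)
    (hx : (l.map (hnnLetter : G ⊕ Bool → HNNExtension G A B φ)).prod = x) :
    tLen x ≤ tCount l :=
  Nat.sInf_le ⟨l, hx, rfl⟩

lemma unitsSMul_length {d : NormalWord.TransversalPair G A B} (u : ℤˣ) (w : NormalWord d) :
    (NormalWord.unitsSMul φ u w).toList.length ≤ w.toList.length + 1 := by
  rw [NormalWord.unitsSMul]
  split_ifs with hcan
  · induction w using NormalWord.consRecOn with
    | ofGroup g => simp [NormalWord.Cancels] at hcan
    | cons g u' w h1 h2 _ =>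
      simp only [NormalWord.unitsSMulWithCancel, NormalWord.consRecOn_cons,
        NormalWord.group_smul_toList, NormalWord.cons_toList, List.length_cons]
      omega
  · simp

lemma smul_word_length {d : NormalWord.TransversalPair G A B}
    (l : List (G ⊕ Bool)) (w : NormalWord d) :
    (((l.map (hnnLetter : G ⊕ Bool → HNNExtension G A B φ)).prod) • w).toList.length
      ≤ tCount l + w.toList.length := by
  induction l generalizing w with
  | nil => simp
  | cons a l ih =>
    rw [List.map_cons, List.prod_cons, mul_smul]
    rcases a with g | b
    · have : (hnnLetter (Sum.inl g) : HNNExtension G A B φ) = of g := rfl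
      rw [this, NormalWord.of_smul_eq_smul, NormalWord.group_smul_toList]
      simpa using ih w
    · have hle := ih w
      rcases b with _ | _
      · have : (hnnLetter (Sum.inr false) : HNNExtension G A B φ) = t ^ ((-1 : ℤˣ) : ℤ) := by
          simp [hnnLetter]
        rw [this, NormalWord.t_pow_smul_eq_unitsSMul]
        have := unitsSMul_length (φ := φ) (-1)
          ((l.map (hnnLetter : G ⊕ Bool → HNNExtension G A B φ)).prod • w)
        simp only [tCount_inr]
        omega
      · have : (hnnLetter (Sum.inr true) : HNNExtension G A B φ) = t ^ ((1 : ℤˣ) : ℤ) := by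
          simp [hnnLetter]
        rw [this, NormalWord.t_pow_smul_eq_unitsSMul]
        have := unitsSMul_length (φ := φ) 1
          ((l.map (hnnLetter : G ⊕ Bool → HNNExtension G A B φ)).prod • w)
        simp only [tCount_inr]
        omega

lemma tLen_reducedWord (w : HNNExtension.NormalWord.ReducedWord G A B) :
    tLen (w.prod φ) = w.toList.length := by
  rcases NormalWord.TransversalPair.nonempty G A B with ⟨d⟩
  have hword : ((Sum.inl w.head :: wordOf w.toList).map
      (hnnLetter : G ⊕ Bool → HNNExtension G A B φ)).prod = w.prod φ := by
    rw [List.map_cons, List.prod_cons, wordOf_prod, reducedWord_prod_eq]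
    rfl
  apply le_antisymm
  · have := tLen_le _ _ hword
    simpa [tCount_wordOf] using this
  · have hne : {k | ∃ l : List (G ⊕ Bool),
        (l.map (hnnLetter : G ⊕ Bool → HNNExtension G A B φ)).prod = w.prod φ ∧
          tCount l = k}.Nonempty :=
      ⟨tCount (Sum.inl w.head :: wordOf w.toList), _, hword, rfl⟩
    obtain ⟨l, hl, hcount⟩ := Nat.sInf_mem hne
    have h1 : ((w.prod φ) • (NormalWord.empty : NormalWord d)).toList.length
        ≤ tCount l + 0 := by
      rw [← hl]; exact smul_word_length l _
    have h2 : (((w.prod φ) • (NormalWord.empty : NormalWord d)).toReducedWord).prod φ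
        = w.prod φ := by
      show ((w.prod φ) • (NormalWord.empty : NormalWord d)).prod φ = w.prod φ
      simp
    have h3 := (HNNExtension.ReducedWord.map_fst_eq_and_of_prod_eq φ h2).1
    have h4 := congrArg List.length h3
    simp only [List.length_map] at h4
    have : ((w.prod φ) • (NormalWord.empty : NormalWord d)).toReducedWord.toList
        = ((w.prod φ) • (NormalWord.empty : NormalWord d)).toList := rfl
    rw [this] at h4
    have h5 : tCount l = tLen (NormalWord.ReducedWord.prod φ w) := hcount
    omega

lemma tLen_of (g : G) : tLen (of g : HNNExtension G A B φ) = 0 := by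
  have h : (of g : HNNExtension G A B φ)
      = (⟨g, [], List.isChain_nil⟩ : HNNExtension.NormalWord.ReducedWord G A B).prod φ := by
    rw [reducedWord_prod_eq]; simp
  rw [h, tLen_reducedWord]
  rfl

lemma tLen_eq_zero_iff (x : HNNExtension G A B φ) :
    tLen x = 0 ↔ ∃ g : G, of g = x := by
  constructor
  · intro hx
    rcases NormalWord.TransversalPair.nonempty G A B with ⟨d⟩
    have hx' : ((NormalWord.equiv φ d) x).prod φ = x := (NormalWord.equiv φ d).symm_apply_apply x
    have hlen : tLen ((((NormalWord.equiv φ d) x)).toReducedWord.prod φ)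
        = ((NormalWord.equiv φ d) x).toList.length := tLen_reducedWord _
    have hx'' : (((NormalWord.equiv φ d) x)).toReducedWord.prod φ = x := hx'
    rw [hx'', hx] at hlen
    have hnil : ((NormalWord.equiv φ d) x).toList = [] := List.length_eq_zero_iff.1 hlen.symm
    refine ⟨((NormalWord.equiv φ d) x).head, ?_⟩
    conv_rhs => rw [← hx'']
    rw [reducedWord_prod_eq]
    have hrl : (((NormalWord.equiv φ d) x)).toReducedWord.toList
        = ((NormalWord.equiv φ d) x).toList := rfl
    rw [hrl, hnil]
    simp
  · rintro ⟨g, rfl⟩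
    exact tLen_of g

end Counting

section Pinch

/-- Modifying the base-group part of the last letter preserves reducedness. -/
lemma chain_modLast (L : List (ℤˣ × G)) (u : ℤˣ) (g g' : G)
    (h : (L ++ [(u, g)]).IsChain
      (fun a b => a.2 ∈ toSubgroup A B a.1 → a.1 = b.1)) :
    (L ++ [(u, g')]).IsChain
      (fun a b => a.2 ∈ toSubgroup A B a.1 → a.1 = b.1) := by
  rw [List.isChain_append] at h ⊢
  refine ⟨h.1, List.isChain_singleton _, ?_⟩
  intro a ha z hz
  simp only [List.head?_cons, Option.mem_def, Option.some_inj] at hz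
  subst hz
  intro hm
  exact h.2.2 a ha (u, g) (by simp) hm

/-- **The pinch lemma** (one application of Britton's lemma):  if `c * W = W * y`
with `c, y` in the base group and `W` a reduced word starting with `g₀ t^{u₁} …` then
`g₀⁻¹ c g₀` lies in the associated subgroup `toSubgroup A B (-u₁)`. -/
lemma pinch (w : HNNExtension.NormalWord.ReducedWord G A B) (u₁ : ℤˣ) (g₁ : G)
    (ltail : List (ℤˣ × G)) (hlist : w.toList = (u₁, g₁) :: ltail) (c y : G)
    (heq : of c * w.prod φ = w.prod φ * of y) :
    w.head⁻¹ * c * w.head ∈ toSubgroup A B (-u₁) := by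
  rcases List.eq_nil_or_concat' w.toList with hnil | ⟨L, p, hLp⟩
  · rw [hlist] at hnil; cases hnil
  · have chain₂ : (L ++ [(p.1, p.2 * y)]).IsChain
        (fun a b => a.2 ∈ toSubgroup A B a.1 → a.1 = b.1) := by
      apply chain_modLast L p.1 p.2 (p.2 * y)
      have := w.chain
      rw [hLp] at this
      simpa using this
    set w₁ : HNNExtension.NormalWord.ReducedWord G A B :=
      ⟨c * w.head, w.toList, w.chain⟩ with hw₁
    set w₂ : HNNExtension.NormalWord.ReducedWord G A B :=
      ⟨w.head, L ++ [(p.1, p.2 * y)], chain₂⟩ with hw₂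
    have e1 : w₁.prod φ = of c * w.prod φ := by
      rw [reducedWord_prod_eq, reducedWord_prod_eq]
      simp [hw₁, mul_assoc]
    have e2 : w₂.prod φ = w.prod φ * of y := by
      rw [reducedWord_prod_eq, reducedWord_prod_eq, hLp]
      simp [hw₂, mul_assoc]
    have hprod : w₁.prod φ = w₂.prod φ := by rw [e1, e2, heq]
    have hkey := (HNNExtension.ReducedWord.map_fst_eq_and_of_prod_eq φ hprod).2
    have hu : w₁.toList.head?.map Prod.fst = some u₁ := by
      simp [hw₁, hlist]
    have hmem : w₁.head⁻¹ * w₂.head ∈ toSubgroup A B (-u₁) := hkey u₁ (by rw [hu]; rfl)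
    have : w₁.head⁻¹ * w₂.head = (w.head⁻¹ * c * w.head)⁻¹ := by
      simp [hw₁, hw₂, mul_assoc]
    rw [this] at hmem
    exact (inv_mem_iff).1 hmem

end Pinch

section Main

/-- **The two-pinch lemma.**  Under the malnormality assumptions, if `W` is a reduced
word with at least two occurrences of `t^{±1}` and `c * W = W * y` with `c`, `y` in the
base group, then `c = 1`. -/
lemma conj_eq_one
    (hPmal : ∀ x : G, x ∉ A → ∀ g ∈ A, x * g * x⁻¹ ∈ A → g = 1)
    (hQmal : ∀ x : G, x ∉ B → ∀ g ∈ B, x * g * x⁻¹ ∈ B → g = 1)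
    (hPQ : ∀ x : G, ∀ g ∈ A, x * g * x⁻¹ ∈ B → g = 1)
    (W : HNNExtension.NormalWord.ReducedWord G A B) (hlen : 2 ≤ W.toList.length)
    (c y : G) (heq : of c * W.prod φ = W.prod φ * of y) : c = 1 := by
  obtain ⟨u₁, g₁, u₂, g₂, rest, hlist⟩ :
      ∃ u₁ g₁ u₂ g₂ rest, W.toList = (u₁, g₁) :: (u₂, g₂) :: rest := by
    rcases hW : W.toList with _ | ⟨⟨u₁, g₁⟩, _ | ⟨⟨u₂, g₂⟩, rest⟩⟩ <;>
      rw [hW] at hlen <;> simp at hlen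
    exact ⟨u₁, g₁, u₂, g₂, rest, rfl⟩
  have h1 := pinch (φ := φ) W u₁ g₁ _ hlist c y heq
  have hch : g₁ ∈ toSubgroup A B u₁ → u₁ = u₂ := by
    have hc := W.chain
    rw [hlist] at hc
    exact (List.isChain_cons_cons.1 hc).1
  have chainV : ((u₂, g₂) :: rest).IsChain
      (fun a b => a.2 ∈ toSubgroup A B a.1 → a.1 = b.1) := by
    have hc := W.chain
    rw [hlist] at hc
    exact (List.isChain_cons_cons.1 hc).2
  set V : HNNExtension.NormalWord.ReducedWord G A B :=
    ⟨g₁, (u₂, g₂) :: rest, chainV⟩ with hV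
  have hWV : W.prod φ = of W.head * (t ^ (u₁ : ℤ) * V.prod φ) := by
    rw [reducedWord_prod_eq, reducedWord_prod_eq, hlist]
    simp [hV, mul_assoc]
  have key : ∀ c₁ : G,
      of c₁ = ((t ^ (u₁ : ℤ) : HNNExtension G A B φ))⁻¹ * (of (W.head⁻¹ * c * W.head) * t ^ (u₁ : ℤ)) →
      of c₁ * V.prod φ = V.prod φ * of y := by
    intro c₁ hc₁
    have heq' : of c * (of W.head * (t ^ (u₁ : ℤ) * V.prod φ))
        = of W.head * (t ^ (u₁ : ℤ) * (V.prod φ * of y)) := by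
      have hh := heq
      rw [hWV] at hh
      simp only [mul_assoc] at hh ⊢
      exact hh
    rw [hc₁]
    simp only [map_mul, map_inv, mul_assoc]
    rw [heq']
    simp only [inv_mul_cancel_left]
  -- finishing move, given that the conjugated element is trivial
  have finish : W.head⁻¹ * c * W.head = 1 → c = 1 := by
    intro hfin
    calc c = W.head * (W.head⁻¹ * c * W.head) * W.head⁻¹ := by group
    _ = 1 := by rw [hfin]; group
  rcases Int.units_eq_one_or u₁ with rfl | rfl
  · -- u₁ = 1, the pinched element lies in B
    have h1' : W.head⁻¹ * c * W.head ∈ B := by rwa [toSubgroup_neg_one] at h1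
    set b : B := ⟨W.head⁻¹ * c * W.head, h1'⟩ with hb
    have hofb : of (φ.symm b : G)
        = ((t ^ ((1 : ℤˣ) : ℤ) : HNNExtension G A B φ))⁻¹ * (of (W.head⁻¹ * c * W.head) * t ^ ((1 : ℤˣ) : ℤ)) := by
      simp only [Units.val_one, zpow_one]
      rw [equiv_symm_eq_conj]
      simp [hb, mul_assoc]
    have h2 := pinch (φ := φ) V u₂ g₂ rest rfl (φ.symm b : G) y (key _ hofb)
    have hVhead : V.head = g₁ := rfl
    rw [hVhead] at h2
    have hsymm1 : (φ.symm b : G) = 1 := by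
      rcases Int.units_eq_one_or u₂ with rfl | rfl
      · -- u₂ = 1 : conjugate lands in B, use the P-Q intersection condition
        rw [toSubgroup_neg_one] at h2
        exact hPQ g₁⁻¹ (φ.symm b : G) (φ.symm b).2 (by rwa [inv_inv])
      · -- u₂ = -1 : conjugate lands in A, use malnormality of A
        rw [neg_neg, toSubgroup_one] at h2
        have hg₁A : g₁ ∉ A := by
          intro hm
          have := hch (by rwa [toSubgroup_one])
          exact absurd this (by decide)
        have hg₁invA : g₁⁻¹ ∉ A := fun hm => hg₁A (by simpa using inv_mem hm)
        exact hPmal g₁⁻¹ hg₁invA (φ.symm b : G) (φ.symm b).2 (by rwa [inv_inv])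
    have hb1 : b = 1 := by
      have h1e : φ.symm b = 1 := Subtype.ext (by simpa using hsymm1)
      have := congrArg φ h1e
      simpa using this
    apply finish
    have := congrArg (Subtype.val) hb1
    simpa [hb] using this
  · -- u₁ = -1, the pinched element lies in A
    have h1' : W.head⁻¹ * c * W.head ∈ A := by rwa [neg_neg, toSubgroup_one] at h1
    set a : A := ⟨W.head⁻¹ * c * W.head, h1'⟩ with ha
    have hofa : of (φ a : G)
        = ((t ^ ((-1 : ℤˣ) : ℤ) : HNNExtension G A B φ))⁻¹ * (of (W.head⁻¹ * c * W.head) * t ^ ((-1 : ℤˣ) : ℤ)) := by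
      simp only [Units.val_neg, Units.val_one, zpow_neg, zpow_one, inv_inv]
      rw [equiv_eq_conj]
      simp [ha, mul_assoc]
    have h2 := pinch (φ := φ) V u₂ g₂ rest rfl (φ a : G) y (key _ hofa)
    have hVhead : V.head = g₁ := rfl
    rw [hVhead] at h2
    have hphi1 : (φ a : G) = 1 := by
      rcases Int.units_eq_one_or u₂ with rfl | rfl
      · -- u₂ = 1 : conjugate lands in B, use malnormality of B
        rw [toSubgroup_neg_one] at h2
        have hg₁B : g₁ ∉ B := by
          intro hm
          have := hch (by rwa [toSubgroup_neg_one])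
          exact absurd this (by decide)
        have hg₁invB : g₁⁻¹ ∉ B := fun hm => hg₁B (by simpa using inv_mem hm)
        exact hQmal g₁⁻¹ hg₁invB (φ a : G) (φ a).2 (by rwa [inv_inv])
      · -- u₂ = -1 : conjugate lands in A, use the P-Q intersection condition
        rw [neg_neg, toSubgroup_one] at h2
        have hconj : g₁ * (g₁⁻¹ * (φ a : G) * g₁) * g₁⁻¹ ∈ B := by
          have : g₁ * (g₁⁻¹ * (φ a : G) * g₁) * g₁⁻¹ = (φ a : G) := by group
          rw [this]
          exact (φ a).2
        have := hPQ g₁ (g₁⁻¹ * (φ a : G) * g₁) h2 hconj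
        calc (φ a : G) = g₁ * (g₁⁻¹ * (φ a : G) * g₁) * g₁⁻¹ := by group
        _ = 1 := by rw [this]; group
    have ha1 : a = 1 := by
      have h1e : φ a = 1 := Subtype.ext (by simpa using hphi1)
      have := congrArg φ.symm h1e
      simpa using this
    apply finish
    have := congrArg (Subtype.val) ha1
    simpa [ha] using this

end Main

section Power

/-- Appending a word whose first letter does not pinch against the last letter. -/
lemma chain_block (L : List (ℤˣ × G)) (uk : ℤˣ) (gg : G) (X : List (ℤˣ × G)) (u₁ : ℤˣ)
    (hL : (L ++ [(uk, gg)]).IsChain (fun a b => a.2 ∈ toSubgroup A B a.1 → a.1 = b.1))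
    (hX : X.IsChain (fun a b => a.2 ∈ toSubgroup A B a.1 → a.1 = b.1))
    (hhead : X.head?.map Prod.fst = some u₁)
    (hJ : gg ∈ toSubgroup A B uk → uk = u₁) :
    ((L ++ [(uk, gg)]) ++ X).IsChain (fun a b => a.2 ∈ toSubgroup A B a.1 → a.1 = b.1) := by
  rw [List.isChain_append]
  refine ⟨hL, hX, ?_⟩
  intro a ha z hz
  have hlast : (L ++ [(uk, gg)]).getLast? = some (uk, gg) := by
    simp [List.getLast?_concat]
  rw [hlast, Option.mem_def, Option.some_inj] at ha
  subst ha
  have hzfst : z.1 = u₁ := by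
    rw [Option.mem_def] at hz
    rw [hz] at hhead
    simpa using hhead
  intro hm
  rw [hzfst]
  exact hJ hm

/-- For an essential cyclically minimal element `h`, the element `h⁴` is represented by
a reduced word with at least two `t`-letters. -/
lemma exists_reducedWord_pow4 (h : HNNExtension G A B φ)
    (h0 : tLen h ≠ 0) (hmin : ∀ c, IsConj c h → tLen h ≤ tLen c) :
    ∃ W : HNNExtension.NormalWord.ReducedWord G A B,
      W.prod φ = h ^ (4 : ℕ) ∧ 2 ≤ W.toList.length := by
  rcases NormalWord.TransversalPair.nonempty G A B with ⟨d⟩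
  set w : HNNExtension.NormalWord.ReducedWord G A B :=
    ((NormalWord.equiv φ d) h).toReducedWord with hw
  have hprod : w.prod φ = h := (NormalWord.equiv φ d).symm_apply_apply h
  have hlen : tLen h = w.toList.length := by rw [← hprod, tLen_reducedWord]
  obtain ⟨u₁, g₁, ltl, hl1⟩ : ∃ u₁ g₁ ltl, w.toList = (u₁, g₁) :: ltl := by
    rcases hL : w.toList with _ | ⟨p, l⟩
    · rw [hL] at hlen
      simp at hlen
      exact absurd hlen h0
    · obtain ⟨a, b⟩ := p
      exact ⟨a, b, l, rfl⟩
  obtain ⟨L, p, hLp⟩ : ∃ L p, w.toList = L ++ [p] := by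
    rcases List.eq_nil_or_concat' w.toList with hnil | h'
    · rw [hl1] at hnil; cases hnil
    · exact h'
  obtain ⟨uk, gk⟩ := p
  set g₀ := w.head with hg₀
  have hh : h = of g₀ * pairProd φ w.toList := by rw [← hprod, reducedWord_prod_eq]
  -- the junction condition (cyclic reducedness), using minimality of `tLen h` in its
  -- conjugacy class
  have hJ : gk * g₀ ∈ toSubgroup A B uk → uk = u₁ := by
    intro hmem
    by_contra hne
    have hu₁ : u₁ = -uk := Int.units_ne_iff_eq_neg.1 (fun hq => hne hq.symm)
    rcases L with _ | ⟨q, L'⟩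
    · -- a word of length one cannot pinch against itself
      rw [hLp] at hl1
      simp only [List.nil_append, List.cons.injEq, Prod.mk.injEq] at hl1
      exact hne hl1.1.1
    · have hq : q = (u₁, g₁) ∧ L' ++ [(uk, gk)] = ltl := by
        rw [hLp] at hl1
        simpa using hl1
      -- construct a shorter conjugate of `h`, contradicting minimality
      subst hu₁
      have hlen2 : w.toList.length = L'.length + 2 := by simp [hLp]
      rcases Int.units_eq_one_or uk with rfl | rfl
      · -- uk = 1, u₁ = -1
        have hmem' : gk * g₀ ∈ A := by rwa [toSubgroup_one] at hmem
        set e : G := (φ ⟨gk * g₀, hmem'⟩ : G) with he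
        have hee : (of e : HNNExtension G A B φ) = t * of (gk * g₀) * t⁻¹ :=
          equiv_eq_conj _
        set z : HNNExtension G A B φ := of g₀ * t⁻¹ with hz
        have hc' : z⁻¹ * h * z = of g₁ * (pairProd φ L' * of e) := by
          rw [hh, hLp, hq.1, hee]
          simp only [List.cons_append, pairProd_cons, pairProd_append, pairProd_nil,
            Units.val_neg, Units.val_one, zpow_neg, zpow_one, map_mul, mul_one, hz]
          group
        have hword : ((Sum.inl g₁ :: (wordOf L' ++ [Sum.inl e])).map
            (hnnLetter : G ⊕ Bool → HNNExtension G A B φ)).prod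
            = of g₁ * (pairProd φ L' * of e) := by
          simp only [List.map_cons, List.map_append, List.prod_cons, List.prod_append,
            wordOf_prod, List.map_nil, List.prod_nil]
          simp [hnnLetter, mul_assoc]
        have hb := tLen_le _ _ hword
        have hb' : tLen (of g₁ * (pairProd φ L' * of e)) ≤ L'.length := by
          simpa [tCount_wordOf] using hb
        rw [← hc'] at hb'
        have hconj : IsConj (z⁻¹ * h * z) h := isConj_iff.2 ⟨z, by group⟩
        have hcon := hmin _ hconj
        omega
      · -- uk = -1, u₁ = 1
        have hmem' : gk * g₀ ∈ B := by rwa [toSubgroup_neg_one] at hmem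
        set e : G := (φ.symm ⟨gk * g₀, hmem'⟩ : G) with he
        have hee : (of e : HNNExtension G A B φ) = t⁻¹ * of (gk * g₀) * t :=
          equiv_symm_eq_conj _
        set z : HNNExtension G A B φ := of g₀ * t with hz
        have hc' : z⁻¹ * h * z = of g₁ * (pairProd φ L' * of e) := by
          rw [hh, hLp, hq.1, hee]
          simp only [List.cons_append, pairProd_cons, pairProd_append, pairProd_nil,
            Units.val_neg, Units.val_one, neg_neg, zpow_neg, zpow_one, map_mul, mul_one, hz]
          group
        have hword : ((Sum.inl g₁ :: (wordOf L' ++ [Sum.inl e])).map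
            (hnnLetter : G ⊕ Bool → HNNExtension G A B φ)).prod
            = of g₁ * (pairProd φ L' * of e) := by
          simp only [List.map_cons, List.map_append, List.prod_cons, List.prod_append,
            wordOf_prod, List.map_nil, List.prod_nil]
          simp [hnnLetter, mul_assoc]
        have hb := tLen_le _ _ hword
        have hb' : tLen (of g₁ * (pairProd φ L' * of e)) ≤ L'.length := by
          simpa [tCount_wordOf] using hb
        rw [← hc'] at hb'
        have hconj : IsConj (z⁻¹ * h * z) h := isConj_iff.2 ⟨z, by group⟩
        have hcon := hmin _ hconj
        omega
  -- now build the reduced word for `h ^ 4`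
  have hchain_l' : (L ++ [(uk, gk * g₀)]).IsChain
      (fun a b => a.2 ∈ toSubgroup A B a.1 → a.1 = b.1) :=
    chain_modLast L uk gk (gk * g₀) (by rw [← hLp]; exact w.chain)
  have hl'fst : (L ++ [(uk, gk * g₀)]).map Prod.fst = w.toList.map Prod.fst := by
    rw [hLp]; simp
  have hheadw : (w.toList.head?.map Prod.fst) = some u₁ := by rw [hl1]; rfl
  have hl'head : ∀ X : List (ℤˣ × G),
      (((L ++ [(uk, gk * g₀)]) ++ X).head?.map Prod.fst) = some u₁ := by
    intro X
    rw [← List.head?_map, List.map_append, hl'fst, hl1]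
    simp
  have hc1 : ((L ++ [(uk, gk * g₀)]) ++ w.toList).IsChain
      (fun a b => a.2 ∈ toSubgroup A B a.1 → a.1 = b.1) :=
    chain_block L uk (gk * g₀) w.toList u₁ hchain_l' w.chain hheadw hJ
  have hc2 : ((L ++ [(uk, gk * g₀)]) ++ ((L ++ [(uk, gk * g₀)]) ++ w.toList)).IsChain
      (fun a b => a.2 ∈ toSubgroup A B a.1 → a.1 = b.1) :=
    chain_block L uk (gk * g₀) _ u₁ hchain_l' hc1 (hl'head _) hJ
  have hc3 : ((L ++ [(uk, gk * g₀)]) ++ ((L ++ [(uk, gk * g₀)]) ++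
      ((L ++ [(uk, gk * g₀)]) ++ w.toList))).IsChain
      (fun a b => a.2 ∈ toSubgroup A B a.1 → a.1 = b.1) :=
    chain_block L uk (gk * g₀) _ u₁ hchain_l' hc2 (hl'head _) hJ
  refine ⟨⟨g₀, (L ++ [(uk, gk * g₀)]) ++ ((L ++ [(uk, gk * g₀)]) ++
      ((L ++ [(uk, gk * g₀)]) ++ w.toList)), hc3⟩, ?_, ?_⟩
  · rw [reducedWord_prod_eq]
    have hp : pairProd φ (L ++ [(uk, gk * g₀)]) = pairProd φ w.toList * of g₀ := by
      rw [hLp]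
      simp [mul_assoc]
    show of g₀ * pairProd φ ((L ++ [(uk, gk * g₀)]) ++ ((L ++ [(uk, gk * g₀)]) ++
      ((L ++ [(uk, gk * g₀)]) ++ w.toList))) = h ^ (4 : ℕ)
    rw [pairProd_append, hp, pairProd_append, hp, pairProd_append, hp, hh]
    simp [pow_succ, mul_assoc]
  · show 2 ≤ ((L ++ [(uk, gk * g₀)]) ++ ((L ++ [(uk, gk * g₀)]) ++
      ((L ++ [(uk, gk * g₀)]) ++ w.toList))).length
    simp
    omega

end Power

theorem statement19 :
    ∃ N : ℕ, ∀ n : ℕ, Odd n → N ≤ n →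
      ∀ (G : Type) [inst : Group G], ∀ (P₁ Q₁ : Subgroup G) (φ : P₁ ≃* Q₁),
        (∀ g : G, g ^ n = 1) →
        (∀ x : G, x ∉ P₁ → ∀ g ∈ P₁, x * g * x⁻¹ ∈ P₁ → g = 1) →
        (∀ x : G, x ∉ Q₁ → ∀ g ∈ Q₁, x * g * x⁻¹ ∈ Q₁ → g = 1) →
        (∀ x : G, ∀ g ∈ P₁, x * g * x⁻¹ ∈ Q₁ → g = 1) →
        ∀ h : HNNExtension G P₁ Q₁ φ,
          (∀ c : HNNExtension G P₁ Q₁ φ, IsConj c h → tLen c ≠ 0) →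
          (∀ c : HNNExtension G P₁ Q₁ φ, IsConj c h → tLen h ≤ tLen c) →
          sSup {Hs : Subgroup (HNNExtension G P₁ Q₁ φ) |
              (∀ x ∈ Hs, tLen x = 0) ∧ h ∈ Subgroup.normalizer (Hs : Set (HNNExtension G P₁ Q₁ φ))} = ⊥ ∧
            ∀ x : HNNExtension G P₁ Q₁ φ, tLen x = 0 →
              tLen (h ^ (-4 : ℤ) * x * h ^ (4 : ℤ)) = 0 → x = 1 := by
  refine ⟨0, ?_⟩
  intro n _ _ G _ P₁ Q₁ φ _ hPmal hQmal hPQ h hess hmin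
  have h0 : tLen h ≠ 0 := hess h (IsConj.refl h)
  obtain ⟨W, hWprod, hWlen⟩ := exists_reducedWord_pow4 h h0 hmin
  have key : ∀ x : HNNExtension G P₁ Q₁ φ, tLen x = 0 →
      tLen ((h ^ (4 : ℕ))⁻¹ * x * h ^ (4 : ℕ)) = 0 → x = 1 := by
    intro x hx hx4
    obtain ⟨c, rfl⟩ := (tLen_eq_zero_iff x).1 hx
    obtain ⟨y, hy⟩ := (tLen_eq_zero_iff _).1 hx4
    have heq : of c * W.prod φ = W.prod φ * of y := by
      rw [hWprod, hy]
      group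
    have hc1 : c = 1 := conj_eq_one hPmal hQmal hPQ W hWlen c y heq
    rw [hc1, map_one]
  have hz : ∀ x : HNNExtension G P₁ Q₁ φ, tLen x = 0 →
      tLen (h ^ (-4 : ℤ) * x * h ^ (4 : ℤ)) = 0 → x = 1 := by
    intro x hx hx4
    apply key x hx
    have e2 : h ^ (4 : ℤ) = h ^ (4 : ℕ) := by
      rw [show (4 : ℤ) = ((4 : ℕ) : ℤ) by norm_num, zpow_natCast]
    have e1 : h ^ (-4 : ℤ) = (h ^ (4 : ℕ))⁻¹ := by
      rw [show (-4 : ℤ) = -((4 : ℕ) : ℤ) by norm_num, zpow_neg, zpow_natCast]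
    rwa [e1, e2] at hx4
  refine ⟨?_, hz⟩
  rw [sSup_eq_bot]
  rintro Hs ⟨hall, hnorm⟩
  rw [eq_bot_iff]
  intro x hxmem
  have h4 : (h ^ (4 : ℕ))⁻¹ ∈ Subgroup.normalizer (Hs : Set (HNNExtension G P₁ Q₁ φ)) := inv_mem (pow_mem hnorm 4)
  have hx4mem : (h ^ (4 : ℕ))⁻¹ * x * ((h ^ (4 : ℕ))⁻¹)⁻¹ ∈ Hs :=
    (Subgroup.mem_normalizer_iff.1 h4 x).1 hxmem
  rw [inv_inv] at hx4mem
  have hx1 := key x (hall x hxmem) (hall _ hx4mem)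
  rw [hx1]
  exact Subgroup.one_mem ⊥

end OlshanskiiSapir
end
end
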